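/- arXiv:1405.1235 — 4 statements merged into one kernel-verified Lean document; each statement's English description precedes it below -/
import Mathlib

section
/- Let x_0,…,x_{n-1} be m×m complex matrices and p ≥ 2 a real number. Then ‖∑_{j=0}^{n-1} x_j‖_p^p + ∑_{0≤j<k≤n-1} ‖x_j − x_k‖_p^p ≤ n^{p−1} ∑_{j=0}^{n-1} ‖x_j‖_p^p, where ‖x‖_p^p = trace((x* x)^{p/2}) is the p-th power of the Schatten p-norm. -/
open Matrix
open scoped NNReal ComplexOrder

lemma hermSmul {n : ℕ} (r : ℝ) {A : Matrix (Fin n) (Fin n) ℂ} (h : A.IsHermitian) :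
    (r • A).IsHermitian := by
  unfold Matrix.IsHermitian at *
  rw [Matrix.conjTranspose_smul, h, star_trivial]

lemma hermSum {n m : ℕ} (A : Fin m → Matrix (Fin n) (Fin n) ℂ)
    (h : ∀ j, (A j).IsHermitian) : (∑ j, A j).IsHermitian := by
  unfold Matrix.IsHermitian at *
  rw [Matrix.conjTranspose_sum]
  exact Finset.sum_congr rfl fun j _ => h j

/-- `traceRpow p a ha = trace (a ^ p)` for a Hermitian matrix `a`, computed by
functional calculus: the sum of the `p`-th powers of the eigenvalues of `a`. -/
noncomputable def traceRpow {n : ℕ} (p : ℝ) (a : Matrix (Fin n) (Fin n) ℂ)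
    (ha : a.IsHermitian) : ℝ := ∑ i, (ha.eigenvalues i) ^ p

/-- `schatten p x = trace ((xᴴ * x) ^ (p / 2)) = trace (|x| ^ p) = ‖x‖_p ^ p`,
the `p`-th power of the Schatten `p`-(quasi-)norm. -/
noncomputable def schatten {m : ℕ} (p : ℝ) (x : Matrix (Fin m) (Fin m) ℂ) : ℝ :=
  traceRpow (p / 2) (xᴴ * x) (Matrix.isHermitian_conjTranspose_mul_self x)

/-- `traceF f a ha = trace (f a)` for a Hermitian matrix `a`, where `f : ℝ≥0 → ℝ≥0` is
applied to the eigenvalues of `a` via functional calculus. -/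
noncomputable def traceF {n : ℕ} (f : ℝ≥0 → ℝ≥0) (a : Matrix (Fin n) (Fin n) ℂ)
    (ha : a.IsHermitian) : ℝ := ∑ i, (f (ha.eigenvalues i).toNNReal : ℝ)


section ClarksonAux
open Finset

namespace Cl

lemma rpow_sub_one_mul {a q : ℝ} (ha : 0 ≤ a) (hq : 1 ≤ q) :
    a ^ (q - 1) * a = a ^ q := by
  rcases eq_or_lt_of_le ha with h | h
  · subst h
    rw [mul_zero, eq_comm, Real.zero_rpow (by linarith)]
  · rw [← Real.rpow_add_one h.ne' (q - 1)]
    norm_num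

lemma jensen_rpow {ι : Type*} (s : Finset ι) (w z : ι → ℝ) (hw : ∀ i ∈ s, 0 ≤ w i)
    (hw' : ∑ i ∈ s, w i = 1) (hz : ∀ i ∈ s, 0 ≤ z i) {q : ℝ} (hq : 1 ≤ q) :
    (∑ i ∈ s, w i * z i) ^ q ≤ ∑ i ∈ s, w i * z i ^ q :=
  Real.rpow_arith_mean_le_arith_mean_rpow s w z hw hw' hz hq

lemma sum_rpow_le {ι : Type*} [Fintype ι] (z : ι → ℝ) (hz : ∀ i, 0 ≤ z i) {q : ℝ}
    (hq : 1 ≤ q) :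
    (∑ i, z i) ^ q ≤ (Fintype.card ι : ℝ) ^ (q - 1) * ∑ i, z i ^ q := by
  rcases isEmpty_or_nonempty ι with h | h
  · simp [Real.zero_rpow (by linarith : q ≠ 0)]
  · have hN : (0:ℝ) < Fintype.card ι := by exact_mod_cast Fintype.card_pos
    have hw' : ∑ _i : ι, (Fintype.card ι : ℝ)⁻¹ = 1 := by
      rw [Finset.sum_const]
      simp only [Finset.card_univ, nsmul_eq_mul]
      field_simp
    have := jensen_rpow Finset.univ (fun _ => (Fintype.card ι : ℝ)⁻¹) z
      (fun i _ => by positivity) hw' (fun i _ => hz i) hq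
    rw [← Finset.mul_sum, ← Finset.mul_sum,
      Real.mul_rpow (by positivity) (Finset.sum_nonneg fun i _ => hz i),
      Real.inv_rpow hN.le] at this
    calc (∑ i, z i) ^ q
        = (Fintype.card ι : ℝ) ^ q * (((Fintype.card ι : ℝ) ^ q)⁻¹ * (∑ i, z i) ^ q) := by
          field_simp
      _ ≤ (Fintype.card ι : ℝ) ^ q * ((Fintype.card ι : ℝ)⁻¹ * ∑ i, z i ^ q) :=
          mul_le_mul_of_nonneg_left this (by positivity)
      _ = (Fintype.card ι : ℝ) ^ (q - 1) * ∑ i, z i ^ q := by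
          rw [← mul_assoc, show q - 1 = q + (-1) by ring, Real.rpow_add hN,
            Real.rpow_neg_one]

lemma pairSum {M : Type*} [AddCommGroup M] [Module ℝ M] {n : ℕ} (c : Fin n → Fin n → M) :
    (∑ j, ∑ k, c j k) + ∑ j, ∑ k ∈ Finset.Ioi j, (c j j + c k k - c j k - c k j)
      = ∑ _i : Fin n, ∑ j, c j j := by
  have hIoi : ∀ (i : Fin n) (f : Fin n → M),
      ∑ j ∈ Finset.Ioi i, f j = ∑ j, if i < j then f j else 0 := by
    intro i f
    rw [show Finset.Ioi i = Finset.univ.filter (fun j => i < j) by ext j; simp,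
      Finset.sum_filter]
  set F : Fin n → Fin n → M := fun i j =>
    c i j + (if i < j then c i i + c j j - c i j - c j i else 0) - c j j with hFdef
  have hF : ∀ i j, F i j + F j i = 0 := by
    intro i j
    rcases lt_trichotomy i j with h | h | h
    · simp only [hFdef, if_pos h, if_neg (asymm h)]
      abel
    · subst h
      simp only [hFdef, lt_irrefl, if_neg (lt_irrefl i)]
      abel
    · simp only [hFdef, if_pos h, if_neg (asymm h)]
      abel
  have hsum : (∑ i, ∑ j, F i j) + (∑ i, ∑ j, F i j) = 0 := by
    calc (∑ i, ∑ j, F i j) + (∑ i, ∑ j, F i j)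
        = (∑ i, ∑ j, F i j) + (∑ j, ∑ i, F i j) := by rw [Finset.sum_comm]
      _ = ∑ i, ∑ j, (F i j + F j i) := by
          rw [← Finset.sum_add_distrib]
          exact Finset.sum_congr rfl fun i _ => by rw [← Finset.sum_add_distrib]
      _ = 0 := by simp [hF]
  have hzero : (∑ i, ∑ j, F i j) = 0 := by
    have h2 : (2:ℝ) • (∑ i, ∑ j, F i j) = 0 := by rw [two_smul]; exact hsum
    have := congrArg (fun x => (2:ℝ)⁻¹ • x) h2
    simpa [smul_smul] using this
  have expand : (∑ i, ∑ j, F i j)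
      = ((∑ j, ∑ k, c j k) + ∑ j, ∑ k ∈ Finset.Ioi j, (c j j + c k k - c j k - c k j))
        - ∑ _i : Fin n, ∑ j, c j j := by
    rw [show (∑ j, ∑ k ∈ Finset.Ioi j, (c j j + c k k - c j k - c k j))
        = ∑ j, ∑ k, if j < k then c j j + c k k - c j k - c k j else 0 from
        Finset.sum_congr rfl fun j _ => hIoi j _]
    simp_rw [hFdef, Finset.sum_sub_distrib, Finset.sum_add_distrib]
  rw [expand] at hzero
  exact sub_eq_zero.mp hzero

end Cl

namespace Cl

variable {d : ℕ}

/-- the eigenvector unitary of a Hermitian matrix, as a plain matrix -/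
noncomputable def Uof {M : Matrix (Fin d) (Fin d) ℂ} (hM : M.IsHermitian) :
    Matrix (Fin d) (Fin d) ℂ := hM.eigenvectorUnitary

lemma U_mul_star {M : Matrix (Fin d) (Fin d) ℂ} (hM : M.IsHermitian) :
    Uof hM * star (Uof hM) = 1 :=
  Matrix.mem_unitaryGroup_iff.mp hM.eigenvectorUnitary.2

lemma U_star_mul {M : Matrix (Fin d) (Fin d) ℂ} (hM : M.IsHermitian) :
    star (Uof hM) * Uof hM = 1 :=
  Matrix.mem_unitaryGroup_iff'.mp hM.eigenvectorUnitary.2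

lemma diag_spectral {M : Matrix (Fin d) (Fin d) ℂ} (hM : M.IsHermitian) :
    star (Uof hM) * M * Uof hM = diagonal (fun i => (hM.eigenvalues i : ℂ)) :=
  by have := hM.conjStarAlgAut_star_eigenvectorUnitary; rw [Unitary.conjStarAlgAut_star_apply] at this; exact this

lemma spectral {M : Matrix (Fin d) (Fin d) ℂ} (hM : M.IsHermitian) :
    M = Uof hM * diagonal (fun i => (hM.eigenvalues i : ℂ)) * star (Uof hM) :=
  hM.spectral_theorem

lemma entry_dot (T B : Matrix (Fin d) (Fin d) ℂ) (i j : Fin d) :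
    (star T * B * T) i j = dotProduct (star (fun a => T a i)) (B *ᵥ (fun a => T a j)) := by
  rw [Matrix.mul_assoc, Matrix.mul_apply, dotProduct]
  refine Finset.sum_congr rfl fun a _ => ?_
  rw [Matrix.star_apply, Matrix.mul_apply, Matrix.mulVec, dotProduct, Pi.star_apply]

lemma conj_diag_entry_re (T : Matrix (Fin d) (Fin d) ℂ) (ρ : Fin d → ℝ) (i : Fin d) :
    ((star T * diagonal (fun k => (ρ k : ℂ)) * T) i i).re
      = ∑ k, ρ k * Complex.normSq (T k i) := by
  rw [Matrix.mul_assoc, Matrix.mul_apply, Complex.re_sum]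
  refine Finset.sum_congr rfl fun k _ => ?_
  rw [Matrix.star_apply, Matrix.diagonal_mul, Complex.star_def]
  have h3 : (starRingEnd ℂ) (T k i) * ((ρ k : ℂ) * T k i)
      = (ρ k : ℂ) * (T k i * (starRingEnd ℂ) (T k i)) := by ring
  rw [h3, Complex.mul_conj, ← Complex.ofReal_mul, Complex.ofReal_re]

/-- the weight of `B` in the eigenbasis of `M` -/
noncomputable def wgt {M : Matrix (Fin d) (Fin d) ℂ} (hM : M.IsHermitian)
    (B : Matrix (Fin d) (Fin d) ℂ) (i : Fin d) : ℝ :=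
  ((star (Uof hM) * B * Uof hM) i i).re

lemma wgt_self {M : Matrix (Fin d) (Fin d) ℂ} (hM : M.IsHermitian) (i : Fin d) :
    wgt hM M i = hM.eigenvalues i := by
  rw [wgt, diag_spectral, Matrix.diagonal_apply_eq, Complex.ofReal_re]

lemma wgt_nonneg {M B : Matrix (Fin d) (Fin d) ℂ} (hM : M.IsHermitian)
    (hB : B.PosSemidef) (i : Fin d) : 0 ≤ wgt hM B i := by
  rw [wgt, entry_dot]
  have := hB.re_dotProduct_nonneg (fun a => Uof hM a i)
  simpa using this

lemma wgt_add {M B C : Matrix (Fin d) (Fin d) ℂ} (hM : M.IsHermitian) (i : Fin d) :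
    wgt hM (B + C) i = wgt hM B i + wgt hM C i := by
  rw [wgt, wgt, wgt, Matrix.mul_add, Matrix.add_mul, Matrix.add_apply, Complex.add_re]

lemma wgt_sum {M : Matrix (Fin d) (Fin d) ℂ} (hM : M.IsHermitian) {ι : Type*}
    (s : Finset ι) (B : ι → Matrix (Fin d) (Fin d) ℂ) (i : Fin d) :
    wgt hM (∑ t ∈ s, B t) i = ∑ t ∈ s, wgt hM (B t) i := by
  rw [wgt, Matrix.mul_sum, Matrix.sum_mul, Matrix.sum_apply, Complex.re_sum]
  rfl

/-- the doubly stochastic matrix relating the eigenbases of `A` and `M` -/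
noncomputable def dd {A M : Matrix (Fin d) (Fin d) ℂ} (hA : A.IsHermitian)
    (hM : M.IsHermitian) (k i : Fin d) : ℝ :=
  Complex.normSq ((star (Uof hA) * Uof hM) k i)

lemma dd_nonneg {A M : Matrix (Fin d) (Fin d) ℂ} (hA : A.IsHermitian)
    (hM : M.IsHermitian) (k i : Fin d) : 0 ≤ dd hA hM k i :=
  Complex.normSq_nonneg _

lemma one_re_entry (X : Matrix (Fin d) (Fin d) ℂ) (h : X = 1) (i : Fin d) : (X i i).re = 1 := by
  subst h; simp

lemma dd_rowsum {A M : Matrix (Fin d) (Fin d) ℂ} (hA : A.IsHermitian)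
    (hM : M.IsHermitian) (k : Fin d) : ∑ i, dd hA hM k i = 1 := by
  have h : (star (Uof hA) * Uof hM) * star (star (Uof hA) * Uof hM) = 1 := by
    rw [StarMul.star_mul, star_star, Matrix.mul_assoc, ← Matrix.mul_assoc (Uof hM),
      U_mul_star, Matrix.one_mul, U_star_mul]
  have := one_re_entry _ h k
  rw [Matrix.mul_apply, Complex.re_sum] at this
  rw [← this]
  refine Finset.sum_congr rfl fun i _ => ?_
  rw [dd, Matrix.star_apply, Complex.star_def, Complex.mul_conj, Complex.ofReal_re]

lemma dd_colsum {A M : Matrix (Fin d) (Fin d) ℂ} (hA : A.IsHermitian)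
    (hM : M.IsHermitian) (i : Fin d) : ∑ k, dd hA hM k i = 1 := by
  have h : star (star (Uof hA) * Uof hM) * (star (Uof hA) * Uof hM) = 1 := by
    rw [StarMul.star_mul, star_star, Matrix.mul_assoc, ← Matrix.mul_assoc (Uof hA),
      U_mul_star, Matrix.one_mul, U_star_mul]
  have := one_re_entry _ h i
  rw [Matrix.mul_apply, Complex.re_sum] at this
  rw [← this]
  refine Finset.sum_congr rfl fun k _ => ?_
  rw [dd, Matrix.star_apply, Complex.star_def]
  rw [show (starRingEnd ℂ) ((star (Uof hA) * Uof hM) k i) * (star (Uof hA) * Uof hM) k i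
    = (star (Uof hA) * Uof hM) k i * (starRingEnd ℂ) ((star (Uof hA) * Uof hM) k i) from
    mul_comm _ _, Complex.mul_conj, Complex.ofReal_re]

/-- weight of a Hermitian `A` in the frame of `M`, via `A`'s eigenvalues -/
lemma wgt_eq_sum_dd {A M : Matrix (Fin d) (Fin d) ℂ} (hA : A.IsHermitian)
    (hM : M.IsHermitian) (i : Fin d) :
    wgt hM A i = ∑ k, hA.eigenvalues k * dd hA hM k i := by
  rw [wgt]
  conv_lhs => rw [spectral hA]
  have : star (Uof hM) * (Uof hA * diagonal (fun k => (hA.eigenvalues k : ℂ)) * star (Uof hA))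
      * Uof hM = star (star (Uof hA) * Uof hM) * diagonal (fun k => (hA.eigenvalues k : ℂ))
      * (star (Uof hA) * Uof hM) := by
    rw [StarMul.star_mul, star_star]
    noncomm_ring
  rw [this, conj_diag_entry_re]
  rfl

/-- frame-change for a spectrally-defined function of `M`, in the eigenbasis of `A` -/
lemma framed_entry_re {A M : Matrix (Fin d) (Fin d) ℂ} (hA : A.IsHermitian)
    (hM : M.IsHermitian) (ρ : Fin d → ℝ) (k : Fin d) :
    ((star (Uof hA) * (Uof hM * diagonal (fun i => (ρ i : ℂ)) * star (Uof hM)) * Uof hA) k k).re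
      = ∑ i, ρ i * dd hA hM k i := by
  have : star (Uof hA) * (Uof hM * diagonal (fun i => (ρ i : ℂ)) * star (Uof hM)) * Uof hA
      = star (star (Uof hM) * Uof hA) * diagonal (fun i => (ρ i : ℂ))
        * (star (Uof hM) * Uof hA) := by
    rw [StarMul.star_mul, star_star]
    noncomm_ring
  rw [this, conj_diag_entry_re]
  refine Finset.sum_congr rfl fun i _ => ?_
  congr 1
  have h2 : (star (Uof hM) * Uof hA) i k = star ((star (Uof hA) * Uof hM) k i) := by
    rw [show star (Uof hM) * Uof hA = star (star (Uof hA) * Uof hM) by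
      rw [StarMul.star_mul, star_star], Matrix.star_apply]
  rw [h2, dd, Complex.star_def, Complex.normSq_conj]

end Cl

namespace Cl2
open Cl

variable {d : ℕ}

lemma diag_quad_bound {A M : Matrix (Fin d) (Fin d) ℂ} (hA : A.IsHermitian)
    (hM : M.IsHermitian) (hMA : (M - A).PosSemidef) (k : Fin d) :
    hA.eigenvalues k ≤ ∑ i, hM.eigenvalues i * dd hA hM k i := by
  have h0 : 0 ≤ ((star (Uof hA) * (M - A) * Uof hA) k k).re := by
    rw [entry_dot]
    simpa using hMA.re_dotProduct_nonneg _
  have hsplit : star (Uof hA) * (M - A) * Uof hA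
      = star (Uof hA) * M * Uof hA - star (Uof hA) * A * Uof hA := by
    rw [Matrix.mul_sub, Matrix.sub_mul]
  rw [hsplit, Matrix.sub_apply, Complex.sub_re] at h0
  have hAkk : ((star (Uof hA) * A * Uof hA) k k).re = hA.eigenvalues k := by
    rw [diag_spectral, Matrix.diagonal_apply_eq, Complex.ofReal_re]
  have hMkk : ((star (Uof hA) * M * Uof hA) k k).re
      = ∑ i, hM.eigenvalues i * dd hA hM k i := by
    conv_lhs => rw [spectral hM]
    exact framed_entry_re hA hM _ k
  linarith

lemma collapse {V : Matrix (Fin d) (Fin d) ℂ} (h1 : star V * V = 1)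
    (D : Matrix (Fin d) (Fin d) ℂ) : star V * (V * D * star V) * V = D := by
  calc star V * (V * D * star V) * V = (star V * V) * D * (star V * V) := by noncomm_ring
    _ = D := by rw [h1, Matrix.one_mul, Matrix.mul_one]

lemma framed_mul {V : Matrix (Fin d) (Fin d) ℂ} (h1 : star V * V = 1) (c e : Fin d → ℂ) :
    (V * diagonal c * star V) * (V * diagonal e * star V)
      = V * diagonal (fun i => c i * e i) * star V := by
  have : (V * diagonal c * star V) * (V * diagonal e * star V)
      = V * (diagonal c * (star V * V) * diagonal e) * star V := by noncomm_ring
  rw [this, h1, Matrix.mul_one, Matrix.diagonal_mul_diagonal]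

lemma shift_spectral {A : Matrix (Fin d) (Fin d) ℂ} (hA : A.IsHermitian) (s : ℝ) :
    A + (s : ℂ) • 1 = Uof hA * diagonal (fun k => ((hA.eigenvalues k + s : ℝ) : ℂ))
      * star (Uof hA) := by
  have h1 : (s : ℂ) • (1 : Matrix (Fin d) (Fin d) ℂ)
      = Uof hA * diagonal (fun _ => (s : ℂ)) * star (Uof hA) := by
    rw [← Matrix.smul_one_eq_diagonal, mul_smul_comm, smul_mul_assoc,
      Matrix.mul_one, U_mul_star]
  conv_lhs => rw [spectral hA, h1]
  rw [← Matrix.add_mul, ← Matrix.mul_add, Matrix.diagonal_add]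
  congr 1
  ext i
  push_cast
  ring

lemma resolvent_mul {A : Matrix (Fin d) (Fin d) ℂ} (hA : A.IsHermitian) {s : ℝ}
    (hs : ∀ k, hA.eigenvalues k + s ≠ 0) :
    (A + (s : ℂ) • 1) * (Uof hA * diagonal (fun k => (((hA.eigenvalues k + s)⁻¹ : ℝ) : ℂ))
        * star (Uof hA)) = 1
    ∧ (Uof hA * diagonal (fun k => (((hA.eigenvalues k + s)⁻¹ : ℝ) : ℂ)) * star (Uof hA))
        * (A + (s : ℂ) • 1) = 1 := by
  rw [shift_spectral hA s, framed_mul (U_star_mul hA), framed_mul (U_star_mul hA)]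
  have h1 : (fun i => ((hA.eigenvalues i + s : ℝ) : ℂ) * (((hA.eigenvalues i + s)⁻¹ : ℝ) : ℂ))
      = fun _ => (1 : ℂ) := by
    funext i
    rw [← Complex.ofReal_mul, mul_inv_cancel₀ (hs i), Complex.ofReal_one]
  have h2 : (fun i => (((hA.eigenvalues i + s)⁻¹ : ℝ) : ℂ) * ((hA.eigenvalues i + s : ℝ) : ℂ))
      = fun _ => (1 : ℂ) := by
    funext i
    rw [← Complex.ofReal_mul, inv_mul_cancel₀ (hs i), Complex.ofReal_one]
  constructor
  · rw [h1, Matrix.diagonal_one, Matrix.mul_one, U_mul_star hA]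
  · rw [h2, Matrix.diagonal_one, Matrix.mul_one, U_mul_star hA]

lemma legendre {P Q R S : Matrix (Fin d) (Fin d) ℂ} (hP : P.IsHermitian)
    (hPpos : P.PosSemidef)
    (hPR : P * R = 1) (hQS : Q * S = 1)
    (hPQ : (Q - P).PosSemidef) (x : Fin d → ℂ) :
    (dotProduct (star x) (S *ᵥ x)).re ≤ (dotProduct (star x) (R *ᵥ x)).re := by
  have key : ∀ z y : Fin d → ℂ, Q *ᵥ z = x → P *ᵥ y = x →
      (dotProduct (star x) z).re ≤ (dotProduct (star x) y).re := by
    intro z y hQz hPy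
    have hyP : ∀ w, dotProduct (star y) (P *ᵥ w) = dotProduct (star x) w := by
      intro w
      rw [Matrix.dotProduct_mulVec]
      congr 1
      rw [← hPy, Matrix.star_mulVec, hP.eq]
    have hzQ : dotProduct (star z) (Q *ᵥ z) = dotProduct (star z) x := by rw [hQz]
    have h1 : 0 ≤ (dotProduct (star (z - y)) (P *ᵥ (z - y))).re :=
      hPpos.re_dotProduct_nonneg _
    have hexp : dotProduct (star (z - y)) (P *ᵥ (z - y))
        = dotProduct (star z) (P *ᵥ z) - dotProduct (star z) x
          - dotProduct (star x) z + dotProduct (star x) y := by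
      rw [star_sub, Matrix.mulVec_sub, sub_dotProduct, dotProduct_sub,
        dotProduct_sub]
      have e1 : dotProduct (star y) (P *ᵥ z) = dotProduct (star x) z := hyP z
      have e2 : dotProduct (star y) (P *ᵥ y) = dotProduct (star x) y := hyP y
      have e3 : dotProduct (star z) (P *ᵥ y) = dotProduct (star z) x := by rw [hPy]
      rw [e1, e2, e3]
      ring
    have h2 : (dotProduct (star z) (P *ᵥ z)).re ≤ (dotProduct (star z) x).re := by
      have h3 : 0 ≤ (dotProduct (star z) ((Q - P) *ᵥ z)).re := hPQ.re_dotProduct_nonneg _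
      rw [Matrix.sub_mulVec, dotProduct_sub, Complex.sub_re] at h3
      rw [← hzQ]
      linarith
    have hconj : (dotProduct (star x) z).re = (dotProduct (star z) x).re := by
      rw [Matrix.star_dotProduct (v := x) (w := z), Complex.star_def, Complex.conj_re]
    rw [hexp] at h1
    simp only [Complex.add_re, Complex.sub_re] at h1
    rw [hconj]
    linarith
  exact key (S *ᵥ x) (R *ᵥ x) (by rw [Matrix.mulVec_mulVec, hQS, Matrix.one_mulVec])
    (by rw [Matrix.mulVec_mulVec, hPR, Matrix.one_mulVec])

lemma smul_one_psd {s : ℝ} (hs : 0 ≤ s) :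
    ((s : ℂ) • (1 : Matrix (Fin d) (Fin d) ℂ)).PosSemidef := by
  rw [Matrix.smul_one_eq_diagonal]
  exact Matrix.PosSemidef.diagonal (Pi.le_def.mpr fun i => by
    simpa using Complex.zero_le_real.mpr hs)

lemma resolvent_pointwise {A M : Matrix (Fin d) (Fin d) ℂ} (hA : A.PosSemidef)
    (hM : M.PosSemidef) (hMA : (M - A).PosSemidef) {s : ℝ} (hs : 0 < s) (k : Fin d) :
    ∑ i, (hM.1.eigenvalues i + s)⁻¹ * dd hA.1 hM.1 k i ≤ (hA.1.eigenvalues k + s)⁻¹ := by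
  have hsA : ∀ j, hA.1.eigenvalues j + s ≠ 0 := fun j =>
    ne_of_gt (by have := hA.eigenvalues_nonneg j; linarith)
  have hsM : ∀ j, hM.1.eigenvalues j + s ≠ 0 := fun j =>
    ne_of_gt (by have := hM.eigenvalues_nonneg j; linarith)
  obtain ⟨hPR, _⟩ := resolvent_mul hA.1 hsA
  obtain ⟨hQS, _⟩ := resolvent_mul hM.1 hsM
  have hPherm : (A + (s : ℂ) • 1).IsHermitian := hA.1.add (smul_one_psd hs.le).1
  have hPpos : (A + (s : ℂ) • 1).PosSemidef := hA.add (smul_one_psd hs.le)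
  have hQP : ((M + (s : ℂ) • 1) - (A + (s : ℂ) • 1)).PosSemidef := by
    have he : (M + (s : ℂ) • 1) - (A + (s : ℂ) • 1) = M - A := by abel
    rw [he]
    exact hMA
  have hleg := legendre hPherm hPpos hPR hQS hQP (fun a => Uof hA.1 a k)
  have hL : (dotProduct (star fun a => Uof hA.1 a k)
      ((Uof hM.1 * diagonal (fun i => (((hM.1.eigenvalues i + s)⁻¹ : ℝ) : ℂ))
        * star (Uof hM.1)) *ᵥ fun a => Uof hA.1 a k)).re
      = ∑ i, (hM.1.eigenvalues i + s)⁻¹ * dd hA.1 hM.1 k i := by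
    rw [← entry_dot]
    exact framed_entry_re hA.1 hM.1 _ k
  have hR : (dotProduct (star fun a => Uof hA.1 a k)
      ((Uof hA.1 * diagonal (fun j => (((hA.1.eigenvalues j + s)⁻¹ : ℝ) : ℂ))
        * star (Uof hA.1)) *ᵥ fun a => Uof hA.1 a k)).re
      = (hA.1.eigenvalues k + s)⁻¹ := by
    rw [← entry_dot, collapse (U_star_mul hA.1), Matrix.diagonal_apply_eq, Complex.ofReal_re]
  rw [← hL, ← hR]
  exact hleg

end Cl2

section
open MeasureTheory Set

namespace Cl3

noncomputable def Jr (r : ℝ) : ℝ := ∫ u in Set.Ioi (0:ℝ), u ^ (r - 1) * (1 / (1 + u))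

lemma cont_piece {c r : ℝ} (hc : 0 ≤ c) :
    ContinuousOn (fun s : ℝ => s ^ (r - 1) * (c / (c + s))) (Set.Ioi 0) := by
  apply ContinuousOn.mul
  · exact ContinuousOn.rpow_const continuousOn_id (fun x hx => Or.inl (ne_of_gt hx))
  · exact ContinuousOn.div continuousOn_const
      (continuousOn_const.add continuousOn_id)
      (fun x hx => ne_of_gt (by have : (0:ℝ) < x := hx; linarith))

lemma integrable_piece {r : ℝ} (h0 : 0 < r) (h1 : r < 1) {c : ℝ} (hc : 0 ≤ c) :
    MeasureTheory.IntegrableOn (fun s : ℝ => s ^ (r - 1) * (c / (c + s))) (Set.Ioi 0) := by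
  have hsplit : Set.Ioc (0:ℝ) 1 ∪ Set.Ioi 1 = Set.Ioi 0 := Set.Ioc_union_Ioi_eq_Ioi zero_le_one
  rw [← hsplit]
  apply MeasureTheory.IntegrableOn.union
  · -- on Ioc 0 1, dominated by s ^ (r-1)
    have hg : MeasureTheory.IntegrableOn (fun s : ℝ => s ^ (r - 1)) (Set.Ioc (0:ℝ) 1) := by
      have := intervalIntegral.intervalIntegrable_rpow' (a := 0) (b := 1)
        (by linarith : (-1:ℝ) < r - 1)
      rwa [intervalIntegrable_iff, Set.uIoc_of_le zero_le_one] at this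
    apply MeasureTheory.Integrable.mono' hg
    · exact ((cont_piece hc).mono (Set.Ioc_subset_Ioi_self)).aestronglyMeasurable
        measurableSet_Ioc
    · rw [MeasureTheory.ae_restrict_iff' measurableSet_Ioc]
      filter_upwards with s hs
      have hs0 : 0 < s := hs.1
      have hfrac0 : 0 ≤ c / (c + s) := div_nonneg hc (by linarith)
      have hfrac1 : c / (c + s) ≤ 1 := by
        apply div_le_one_of_le₀ (by linarith) (by linarith)
      have hrp : (0:ℝ) ≤ s ^ (r - 1) := Real.rpow_nonneg hs0.le _
      rw [Real.norm_eq_abs, abs_of_nonneg (mul_nonneg hrp hfrac0)]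
      calc s ^ (r - 1) * (c / (c + s)) ≤ s ^ (r - 1) * 1 :=
            mul_le_mul_of_nonneg_left hfrac1 hrp
        _ = s ^ (r - 1) := mul_one _
  · -- on Ioi 1, dominated by c * s ^ (r-2)
    have hg : MeasureTheory.IntegrableOn (fun s : ℝ => c * s ^ (r - 2)) (Set.Ioi (1:ℝ)) :=
      (integrableOn_Ioi_rpow_of_lt (by linarith : r - 2 < -1) one_pos).const_mul c
    apply MeasureTheory.Integrable.mono' hg
    · exact ((cont_piece hc).mono (t := Set.Ioi (1:ℝ)) (fun x hx => Set.mem_Ioi.mpr (lt_trans one_pos (Set.mem_Ioi.mp hx)))).aestronglyMeasurable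
        measurableSet_Ioi
    · rw [MeasureTheory.ae_restrict_iff' measurableSet_Ioi]
      filter_upwards with s hs
      have hs1 : (1:ℝ) < s := hs
      have hs0 : (0:ℝ) < s := lt_trans one_pos hs1
      have hfrac0 : 0 ≤ c / (c + s) := div_nonneg hc (by linarith)
      have hrp : (0:ℝ) ≤ s ^ (r - 1) := Real.rpow_nonneg hs0.le _
      rw [Real.norm_eq_abs, abs_of_nonneg (mul_nonneg hrp hfrac0)]
      have hfrac2 : c / (c + s) ≤ c / s := by
        gcongr <;> linarith
      calc s ^ (r - 1) * (c / (c + s)) ≤ s ^ (r - 1) * (c / s) :=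
            mul_le_mul_of_nonneg_left hfrac2 hrp
        _ = c * (s ^ (r - 1) * s⁻¹) := by ring
        _ = c * s ^ (r - 2) := by
            rw [show (r - 2 : ℝ) = (r - 1) + (-1) by ring, Real.rpow_add hs0,
              Real.rpow_neg_one]

lemma Jr_pos {r : ℝ} (h0 : 0 < r) (h1 : r < 1) : 0 < Jr r := by
  rw [Jr]
  have hint : MeasureTheory.IntegrableOn (fun u : ℝ => u ^ (r - 1) * (1 / (1 + u)))
      (Set.Ioi 0) := by simpa using integrable_piece h0 h1 (zero_le_one)
  rw [MeasureTheory.setIntegral_pos_iff_support_of_nonneg_ae ?hnn hint]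
  · have hsub : Set.Ioi (0:ℝ) ⊆ Function.support fun u => u ^ (r - 1) * (1 / (1 + u)) := by
      intro u hu
      have hu0 : (0:ℝ) < u := hu
      have : 0 < u ^ (r - 1) * (1 / (1 + u)) := by positivity
      exact ne_of_gt this
    rw [Set.inter_eq_self_of_subset_right hsub, Real.volume_Ioi]
    exact ENNReal.zero_lt_top
  · filter_upwards [MeasureTheory.ae_restrict_mem measurableSet_Ioi] with u hu
    have hu0 : (0:ℝ) < u := hu
    dsimp
    positivity

lemma f_integral {r : ℝ} (h0 : 0 < r) (h1 : r < 1) {c : ℝ} (hc : 0 ≤ c) :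
    ∫ s in Set.Ioi (0:ℝ), s ^ (r - 1) * (c / (c + s)) = c ^ r * Jr r := by
  rcases eq_or_lt_of_le hc with h | h
  · subst h
    simp [Real.zero_rpow (ne_of_gt h0)]
  · have hsubs := MeasureTheory.integral_comp_mul_left_Ioi
      (fun s : ℝ => s ^ (r - 1) * (c / (c + s))) 0 h
    rw [mul_zero] at hsubs
    -- hsubs : ∫ x in Ioi 0, f (c * x) = c⁻¹ • ∫ x in Ioi 0, f x
    have hcongr : ∀ x ∈ Set.Ioi (0:ℝ),
        (c * x) ^ (r - 1) * (c / (c + c * x)) = c ^ (r - 1) * (x ^ (r - 1) * (1 / (1 + x))) := by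
      intro x hx
      have hx0 : (0:ℝ) < x := hx
      rw [Real.mul_rpow h.le hx0.le]
      have h1x : c / (c + c * x) = 1 / (1 + x) := by
        rw [show c + c * x = c * (1 + x) by ring,
          show c / (c * (1 + x)) = c * 1 / (c * (1 + x)) by rw [mul_one],
          mul_div_mul_left _ _ (ne_of_gt h)]
      rw [h1x]
      ring
    have h2 : (∫ x in Set.Ioi (0:ℝ), (c * x) ^ (r - 1) * (c / (c + c * x)))
        = c ^ (r - 1) * Jr r := by
      rw [MeasureTheory.setIntegral_congr_fun measurableSet_Ioi hcongr,
        MeasureTheory.integral_const_mul]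
      rfl
    rw [h2] at hsubs
    have := congrArg (fun z => c * z) hsubs
    simp only [smul_eq_mul] at this
    rw [← mul_assoc c c⁻¹, mul_inv_cancel₀ (ne_of_gt h), one_mul] at this
    rw [← this, ← mul_assoc]
    congr 1
    have hr : c ^ r = c ^ (1:ℝ) * c ^ (r - 1) := by
      rw [← Real.rpow_add h]
      norm_num
    rw [hr, Real.rpow_one]

lemma int_compare {r : ℝ} (h0 : 0 < r) (h1 : r < 1) {ι κ : Type*} [Fintype ι] [Fintype κ]
    (γ c : ι → ℝ) (δ e : κ → ℝ) (hγ : ∀ t, 0 ≤ γ t) (hc : ∀ t, 0 ≤ c t)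
    (hδ : ∀ u, 0 ≤ δ u) (he : ∀ u, 0 ≤ e u)
    (hpt : ∀ s : ℝ, 0 < s → ∑ u, δ u * (e u / (e u + s)) ≤ ∑ t, γ t * (c t / (c t + s))) :
    ∑ u, δ u * e u ^ r ≤ ∑ t, γ t * c t ^ r := by
  have hFint : MeasureTheory.IntegrableOn
      (fun s : ℝ => ∑ t, γ t * (s ^ (r - 1) * (c t / (c t + s)))) (Set.Ioi 0) :=
    MeasureTheory.integrable_finset_sum _ (fun t _ =>
      ((integrable_piece h0 h1 (hc t)).const_mul (γ t)))
  have hGint : MeasureTheory.IntegrableOn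
      (fun s : ℝ => ∑ u, δ u * (s ^ (r - 1) * (e u / (e u + s)))) (Set.Ioi 0) :=
    MeasureTheory.integrable_finset_sum _ (fun u _ =>
      ((integrable_piece h0 h1 (he u)).const_mul (δ u)))
  have hmono := MeasureTheory.setIntegral_mono_on hGint hFint measurableSet_Ioi ?ptwise
  · rw [MeasureTheory.integral_finset_sum _ (fun t _ =>
      ((integrable_piece h0 h1 (hc t)).const_mul (γ t))),
      MeasureTheory.integral_finset_sum _ (fun u _ =>
      ((integrable_piece h0 h1 (he u)).const_mul (δ u)))] at hmono
    simp_rw [MeasureTheory.integral_const_mul, f_integral h0 h1 (hc _),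
      f_integral h0 h1 (he _)] at hmono
    have hJ := Jr_pos h0 h1
    have h2 : (∑ u, δ u * e u ^ r) * Jr r ≤ (∑ t, γ t * c t ^ r) * Jr r := by
      rw [Finset.sum_mul, Finset.sum_mul]
      simpa only [mul_assoc] using hmono
    exact le_of_mul_le_mul_right h2 hJ
  · intro s hs
    have hs0 : (0:ℝ) < s := hs
    have hrp : (0:ℝ) ≤ s ^ (r - 1) := Real.rpow_nonneg hs0.le _
    calc ∑ u, δ u * (s ^ (r - 1) * (e u / (e u + s)))
        = s ^ (r - 1) * ∑ u, δ u * (e u / (e u + s)) := by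
          rw [Finset.mul_sum]; exact Finset.sum_congr rfl fun u _ => by ring
      _ ≤ s ^ (r - 1) * ∑ t, γ t * (c t / (c t + s)) :=
          mul_le_mul_of_nonneg_left (hpt s hs0) hrp
      _ = ∑ t, γ t * (s ^ (r - 1) * (c t / (c t + s))) := by
          rw [Finset.mul_sum]; exact Finset.sum_congr rfl fun t _ => by ring

end Cl3

end

namespace Cl4
open Cl Cl2 Cl3

variable {d : ℕ}

/-- Main per-matrix superadditivity bound : tr A^q ≤ Σ μ^{q-1} w_i -/
lemma B1 {A M : Matrix (Fin d) (Fin d) ℂ} (hA : A.PosSemidef) (hM : M.PosSemidef)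
    (hMA : (M - A).PosSemidef) {q : ℝ} (hq : 1 ≤ q) :
    ∑ k, hA.1.eigenvalues k ^ q ≤ ∑ i, hM.1.eigenvalues i ^ (q - 1) * wgt hM.1 A i := by
  have hα : ∀ k, 0 ≤ hA.1.eigenvalues k := hA.eigenvalues_nonneg
  have hμ : ∀ i, 0 ≤ hM.1.eigenvalues i := hM.eigenvalues_nonneg
  have hRHS : ∑ i, hM.1.eigenvalues i ^ (q - 1) * wgt hM.1 A i
      = ∑ k, hA.1.eigenvalues k * ∑ i, dd hA.1 hM.1 k i * hM.1.eigenvalues i ^ (q - 1) := by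
    simp_rw [wgt_eq_sum_dd hA.1 hM.1, Finset.mul_sum]
    rw [Finset.sum_comm]
    exact Finset.sum_congr rfl fun k _ => Finset.sum_congr rfl fun i _ => by ring
  rw [hRHS]
  rcases eq_or_lt_of_le hq with hq1 | hq1
  · -- q = 1
    rw [← hq1]
    norm_num
    calc ∑ k, hA.1.eigenvalues k
        = ∑ k, hA.1.eigenvalues k * ∑ i, dd hA.1 hM.1 k i := by
          refine Finset.sum_congr rfl fun k _ => ?_
          rw [dd_rowsum hA.1 hM.1 k, mul_one]
      _ ≤ ∑ k, hA.1.eigenvalues k * ∑ i, dd hA.1 hM.1 k i := le_refl _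
  · rcases le_or_gt 2 q with hq2 | hq2
    · -- q ≥ 2
      refine Finset.sum_le_sum fun k _ => ?_
      have j2 : hA.1.eigenvalues k ≤ ∑ i, dd hA.1 hM.1 k i * hM.1.eigenvalues i := by
        have := diag_quad_bound hA.1 hM.1 hMA k
        calc hA.1.eigenvalues k ≤ ∑ i, hM.1.eigenvalues i * dd hA.1 hM.1 k i := this
          _ = ∑ i, dd hA.1 hM.1 k i * hM.1.eigenvalues i :=
            Finset.sum_congr rfl fun i _ => mul_comm _ _
      have j1 : (∑ i, dd hA.1 hM.1 k i * hM.1.eigenvalues i) ^ (q - 1)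
          ≤ ∑ i, dd hA.1 hM.1 k i * hM.1.eigenvalues i ^ (q - 1) :=
        jensen_rpow Finset.univ _ _ (fun i _ => dd_nonneg hA.1 hM.1 k i)
          (dd_rowsum hA.1 hM.1 k) (fun i _ => hμ i) (by linarith)
      have j3 : hA.1.eigenvalues k ^ (q - 1)
          ≤ ∑ i, dd hA.1 hM.1 k i * hM.1.eigenvalues i ^ (q - 1) :=
        le_trans (Real.rpow_le_rpow (hα k) j2 (by linarith)) j1
      calc hA.1.eigenvalues k ^ q
          = hA.1.eigenvalues k * hA.1.eigenvalues k ^ (q - 1) := by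
            rw [mul_comm, rpow_sub_one_mul (hα k) hq]
        _ ≤ hA.1.eigenvalues k * ∑ i, dd hA.1 hM.1 k i * hM.1.eigenvalues i ^ (q - 1) :=
            mul_le_mul_of_nonneg_left j3 (hα k)
    · -- 1 < q < 2 : via the integral representation
      have hr0 : 0 < q - 1 := by linarith
      have hr1 : q - 1 < 1 := by linarith
      have hsumw : ∀ i, wgt hM.1 A i = ∑ k, hA.1.eigenvalues k * dd hA.1 hM.1 k i :=
        wgt_eq_sum_dd hA.1 hM.1
      have key := int_compare hr0 hr1 (fun i => wgt hM.1 A i) (fun i => hM.1.eigenvalues i)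
        (fun k => hA.1.eigenvalues k) (fun k => hA.1.eigenvalues k)
        (fun i => wgt_nonneg hM.1 hA i) hμ hα hα ?hpt
      · calc ∑ k, hA.1.eigenvalues k ^ q
            = ∑ k, hA.1.eigenvalues k * hA.1.eigenvalues k ^ (q - 1) := by
              refine Finset.sum_congr rfl fun k _ => ?_
              rw [mul_comm, rpow_sub_one_mul (hα k) hq]
          _ ≤ ∑ i, wgt hM.1 A i * hM.1.eigenvalues i ^ (q - 1) := key
          _ = ∑ k, hA.1.eigenvalues k * ∑ i, dd hA.1 hM.1 k i * hM.1.eigenvalues i ^ (q - 1) := by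
              rw [← hRHS]
              exact Finset.sum_congr rfl fun i _ => mul_comm _ _
      case hpt =>
        intro s hs
        -- rewrite x/(x+s) = 1 - s * (x+s)⁻¹
        have frac_eq : ∀ x : ℝ, 0 ≤ x → x / (x + s) = 1 - s * (x + s)⁻¹ := by
          intro x hx
          have hxs : x + s ≠ 0 := by positivity
          field_simp
          ring
        have hWsum : ∑ i, wgt hM.1 A i = ∑ k, hA.1.eigenvalues k := by
          simp_rw [hsumw]
          rw [Finset.sum_comm]
          refine Finset.sum_congr rfl fun k _ => ?_
          rw [← Finset.mul_sum, dd_rowsum hA.1 hM.1 k, mul_one]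
        have hres : ∑ i, wgt hM.1 A i * (hM.1.eigenvalues i + s)⁻¹
            ≤ ∑ k, hA.1.eigenvalues k * (hA.1.eigenvalues k + s)⁻¹ := by
          have hswap : ∑ i, wgt hM.1 A i * (hM.1.eigenvalues i + s)⁻¹
              = ∑ k, hA.1.eigenvalues k * ∑ i, (hM.1.eigenvalues i + s)⁻¹ * dd hA.1 hM.1 k i := by
            simp_rw [hsumw, Finset.sum_mul]
            rw [Finset.sum_comm]
            refine Finset.sum_congr rfl fun k _ => ?_
            rw [Finset.mul_sum]
            exact Finset.sum_congr rfl fun i _ => by ring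
          rw [hswap]
          exact Finset.sum_le_sum fun k _ => mul_le_mul_of_nonneg_left
            (resolvent_pointwise hA hM hMA hs k) (hα k)
        calc ∑ k, hA.1.eigenvalues k * (hA.1.eigenvalues k / (hA.1.eigenvalues k + s))
            = ∑ k, hA.1.eigenvalues k
              - s * ∑ k, hA.1.eigenvalues k * (hA.1.eigenvalues k + s)⁻¹ := by
              rw [Finset.mul_sum, ← Finset.sum_sub_distrib]
              refine Finset.sum_congr rfl fun k _ => ?_
              rw [frac_eq _ (hα k)]
              ring
          _ ≤ ∑ i, wgt hM.1 A i - s * ∑ i, wgt hM.1 A i * (hM.1.eigenvalues i + s)⁻¹ := by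
              rw [hWsum]
              have := mul_le_mul_of_nonneg_left hres hs.le
              linarith
          _ = ∑ i, wgt hM.1 A i * (hM.1.eigenvalues i / (hM.1.eigenvalues i + s)) := by
              rw [Finset.mul_sum, ← Finset.sum_sub_distrib]
              refine Finset.sum_congr rfl fun i _ => ?_
              rw [frac_eq _ (hμ i)]
              ring

end Cl4

namespace Cl5
open Cl Cl2 Cl3 Cl4

variable {d : ℕ}

lemma psd_sum {ι : Type*} (s : Finset ι) (f : ι → Matrix (Fin d) (Fin d) ℂ)
    (h : ∀ t ∈ s, (f t).PosSemidef) : (∑ t ∈ s, f t).PosSemidef :=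
  Finset.sum_induction f _ (fun _ _ ha hb => ha.add hb) Matrix.PosSemidef.zero h

lemma C1 {ι : Type*} [Fintype ι] (B : ι → Matrix (Fin d) (Fin d) ℂ)
    (hB : ∀ t, (B t).PosSemidef) (hM : (∑ t, B t).PosSemidef) {q : ℝ} (hq : 1 ≤ q) :
    ∑ i, hM.1.eigenvalues i ^ q
      ≤ (Fintype.card ι : ℝ) ^ (q - 1) * ∑ t, ∑ k, (hB t).1.eigenvalues k ^ q := by
  have hμw : ∀ i, hM.1.eigenvalues i = ∑ t, wgt hM.1 (B t) i := by
    intro i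
    rw [← wgt_self hM.1 i]
    exact wgt_sum hM.1 Finset.univ B i
  have step1 : ∀ i, hM.1.eigenvalues i ^ q
      ≤ (Fintype.card ι : ℝ) ^ (q - 1) * ∑ t, wgt hM.1 (B t) i ^ q := by
    intro i
    rw [hμw i]
    exact sum_rpow_le _ (fun t => wgt_nonneg hM.1 (hB t) i) hq
  have peierls : ∀ t, ∑ i, wgt hM.1 (B t) i ^ q ≤ ∑ k, (hB t).1.eigenvalues k ^ q := by
    intro t
    have hβ : ∀ k, 0 ≤ (hB t).1.eigenvalues k := (hB t).eigenvalues_nonneg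
    calc ∑ i, wgt hM.1 (B t) i ^ q
        ≤ ∑ i, ∑ k, dd (hB t).1 hM.1 k i * (hB t).1.eigenvalues k ^ q := by
          refine Finset.sum_le_sum fun i _ => ?_
          have hrw : wgt hM.1 (B t) i
              = ∑ k, dd (hB t).1 hM.1 k i * (hB t).1.eigenvalues k := by
            rw [wgt_eq_sum_dd (hB t).1 hM.1 i]
            exact Finset.sum_congr rfl fun k _ => mul_comm _ _
          rw [hrw]
          exact jensen_rpow Finset.univ _ _ (fun k _ => dd_nonneg _ _ k i)
            (dd_colsum (hB t).1 hM.1 i) (fun k _ => hβ k) hq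
      _ = ∑ k, (hB t).1.eigenvalues k ^ q := by
          rw [Finset.sum_comm]
          refine Finset.sum_congr rfl fun k _ => ?_
          rw [← Finset.sum_mul, dd_rowsum (hB t).1 hM.1 k, one_mul]
  calc ∑ i, hM.1.eigenvalues i ^ q
      ≤ ∑ i, (Fintype.card ι : ℝ) ^ (q - 1) * ∑ t, wgt hM.1 (B t) i ^ q :=
        Finset.sum_le_sum fun i _ => step1 i
    _ = (Fintype.card ι : ℝ) ^ (q - 1) * ∑ t, ∑ i, wgt hM.1 (B t) i ^ q := by
        rw [← Finset.mul_sum, Finset.sum_comm]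
    _ ≤ _ := by
        apply mul_le_mul_of_nonneg_left _ (Real.rpow_nonneg (Nat.cast_nonneg _) _)
        exact Finset.sum_le_sum fun t _ => peierls t

theorem clarkson {m : ℕ} (n : ℕ) (x : Fin n → Matrix (Fin m) (Fin m) ℂ)
    (p : ℝ) (hp : 2 ≤ p) :
    schatten p (∑ j, x j) + ∑ j : Fin n, ∑ k ∈ Finset.Ioi j, schatten p (x j - x k)
      ≤ (n : ℝ) ^ (p - 1) * ∑ j, schatten p (x j) := by
  have hq : 1 ≤ p / 2 := by linarith
  have hq0 : p / 2 ≠ 0 := by positivity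
  have hschatten_zero : schatten p (0 : Matrix (Fin m) (Fin m) ℂ) = 0 := by
    rw [schatten, traceRpow]
    have hz : ∀ k, (Matrix.isHermitian_conjTranspose_mul_self
        (0 : Matrix (Fin m) (Fin m) ℂ)).eigenvalues k = 0 := by
      intro k
      rw [Matrix.IsHermitian.eigenvalues_eq]
      simp
    refine Finset.sum_eq_zero fun k _ => ?_
    rw [hz k, Real.zero_rpow hq0]
  rcases Nat.eq_zero_or_pos n with hn | hn
  · subst hn
    simp [hschatten_zero]
  -- notation
  have hnR : (0:ℝ) < (n:ℝ) := by exact_mod_cast hn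
  set c : Fin n → Fin n → Matrix (Fin m) (Fin m) ℂ := fun j k => (x j)ᴴ * x k with hcdef
  set σ : Finset ((_ : Fin n) × Fin n) :=
    (Finset.univ : Finset (Fin n)).sigma (fun j => Finset.Ioi j) with hσdef
  -- the matrices
  have hA0psd : ((∑ j, x j)ᴴ * (∑ j, x j)).PosSemidef :=
    Matrix.posSemidef_conjTranspose_mul_self _
  have hDpsd : ∀ pr : (_ : Fin n) × Fin n,
      ((x pr.1 - x pr.2)ᴴ * (x pr.1 - x pr.2)).PosSemidef :=
    fun pr => Matrix.posSemidef_conjTranspose_mul_self _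
  have hBpsd : ∀ t : Fin n × Fin n, ((x t.2)ᴴ * x t.2).PosSemidef :=
    fun t => Matrix.posSemidef_conjTranspose_mul_self _
  have hMpsd : (∑ t : Fin n × Fin n, (x t.2)ᴴ * x t.2).PosSemidef :=
    psd_sum _ _ fun t _ => hBpsd t
  -- Step A : algebraic identity
  have hA0 : (∑ j, x j)ᴴ * (∑ j, x j) = ∑ j, ∑ k, c j k := by
    rw [Matrix.conjTranspose_sum, Matrix.sum_mul]
    exact Finset.sum_congr rfl fun j _ => by rw [Matrix.mul_sum]
  have hDeq : ∀ (j k : Fin n),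
      (x j - x k)ᴴ * (x j - x k) = c j j + c k k - c j k - c k j := by
    intro j k
    rw [Matrix.conjTranspose_sub, Matrix.sub_mul, Matrix.mul_sub, Matrix.mul_sub]
    simp only [hcdef]
    abel
  have hMsum : (∑ j, x j)ᴴ * (∑ j, x j)
      + ∑ pr ∈ σ, (x pr.1 - x pr.2)ᴴ * (x pr.1 - x pr.2)
      = ∑ t : Fin n × Fin n, (x t.2)ᴴ * x t.2 := by
    rw [hA0, hσdef, Finset.sum_sigma]
    have h1 : ∀ j, ∑ k ∈ Finset.Ioi j, (x j - x k)ᴴ * (x j - x k)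
        = ∑ k ∈ Finset.Ioi j, (c j j + c k k - c j k - c k j) :=
      fun j => Finset.sum_congr rfl fun k _ => hDeq j k
    rw [Finset.sum_congr rfl fun j _ => h1 j, pairSum c, Fintype.sum_prod_type]
  -- Step B : superadditivity
  have hMA0 : ((∑ t : Fin n × Fin n, (x t.2)ᴴ * x t.2)
      - (∑ j, x j)ᴴ * (∑ j, x j)).PosSemidef := by
    have he : (∑ t : Fin n × Fin n, (x t.2)ᴴ * x t.2) - (∑ j, x j)ᴴ * (∑ j, x j)
        = ∑ pr ∈ σ, (x pr.1 - x pr.2)ᴴ * (x pr.1 - x pr.2) := by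
      rw [← hMsum]
      abel
    rw [he]
    exact psd_sum _ _ fun pr _ => hDpsd pr
  have hMD : ∀ pr ∈ σ, ((∑ t : Fin n × Fin n, (x t.2)ᴴ * x t.2)
      - (x pr.1 - x pr.2)ᴴ * (x pr.1 - x pr.2)).PosSemidef := by
    intro pr hpr
    have he : (∑ t : Fin n × Fin n, (x t.2)ᴴ * x t.2)
        - (x pr.1 - x pr.2)ᴴ * (x pr.1 - x pr.2)
        = (∑ j, x j)ᴴ * (∑ j, x j)
          + ∑ t ∈ σ.erase pr, (x t.1 - x t.2)ᴴ * (x t.1 - x t.2) := by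
      rw [← hMsum, ← Finset.add_sum_erase _ _ hpr]
      abel
    rw [he]
    exact hA0psd.add (psd_sum _ _ fun t _ => hDpsd t)
  have hμ : ∀ i, 0 ≤ hMpsd.1.eigenvalues i := hMpsd.eigenvalues_nonneg
  have stepB : schatten p (∑ j, x j)
      + ∑ pr ∈ σ, schatten p (x pr.1 - x pr.2)
      ≤ ∑ i, hMpsd.1.eigenvalues i ^ (p / 2) := by
    have hB1 : schatten p (∑ j, x j)
        ≤ ∑ i, hMpsd.1.eigenvalues i ^ (p / 2 - 1) * wgt hMpsd.1 ((∑ j, x j)ᴴ * (∑ j, x j)) i :=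
      B1 hA0psd hMpsd hMA0 hq
    have hB2 : ∀ pr ∈ σ, schatten p (x pr.1 - x pr.2)
        ≤ ∑ i, hMpsd.1.eigenvalues i ^ (p / 2 - 1)
          * wgt hMpsd.1 ((x pr.1 - x pr.2)ᴴ * (x pr.1 - x pr.2)) i :=
      fun pr hpr => B1 (hDpsd pr) hMpsd (hMD pr hpr) hq
    calc schatten p (∑ j, x j) + ∑ pr ∈ σ, schatten p (x pr.1 - x pr.2)
        ≤ (∑ i, hMpsd.1.eigenvalues i ^ (p / 2 - 1)
            * wgt hMpsd.1 ((∑ j, x j)ᴴ * (∑ j, x j)) i)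
          + ∑ pr ∈ σ, ∑ i, hMpsd.1.eigenvalues i ^ (p / 2 - 1)
            * wgt hMpsd.1 ((x pr.1 - x pr.2)ᴴ * (x pr.1 - x pr.2)) i :=
          add_le_add hB1 (Finset.sum_le_sum hB2)
      _ = ∑ i, hMpsd.1.eigenvalues i ^ (p / 2 - 1)
            * (wgt hMpsd.1 ((∑ j, x j)ᴴ * (∑ j, x j)) i
              + ∑ pr ∈ σ, wgt hMpsd.1 ((x pr.1 - x pr.2)ᴴ * (x pr.1 - x pr.2)) i) := by
          rw [Finset.sum_comm, ← Finset.sum_add_distrib]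
          refine Finset.sum_congr rfl fun i _ => ?_
          rw [mul_add, Finset.mul_sum σ
            (fun pr => wgt hMpsd.1 ((x pr.1 - x pr.2)ᴴ * (x pr.1 - x pr.2)) i)
            (hMpsd.1.eigenvalues i ^ (p / 2 - 1))]
      _ = ∑ i, hMpsd.1.eigenvalues i ^ (p / 2) := by
          refine Finset.sum_congr rfl fun i _ => ?_
          rw [← wgt_sum hMpsd.1, ← wgt_add hMpsd.1, hMsum, wgt_self hMpsd.1,
            rpow_sub_one_mul (hμ i) hq]
  -- Step C : power mean
  have stepC := C1 (fun t : Fin n × Fin n => (x t.2)ᴴ * x t.2) hBpsd hMpsd hq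
  have hcard : (Fintype.card (Fin n × Fin n) : ℝ) = (n : ℝ) * (n : ℝ) := by
    simp [Fintype.card_prod]
  have hRHSeq : ∑ t : Fin n × Fin n, ∑ k, ((hBpsd t).1.eigenvalues k) ^ (p / 2)
      = (n : ℝ) * ∑ j, schatten p (x j) := by
    rw [Fintype.sum_prod_type]
    have : ∀ i : Fin n, ∑ j, ∑ k, ((hBpsd (i, j)).1.eigenvalues k) ^ (p / 2)
        = ∑ j, schatten p (x j) := fun i => rfl
    rw [Finset.sum_congr rfl fun i _ => this i, Finset.sum_const]
    simp [nsmul_eq_mul]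
  have hpow : ((n : ℝ) * (n : ℝ)) ^ (p / 2 - 1) * (n : ℝ) = (n : ℝ) ^ (p - 1) := by
    rw [Real.mul_rpow hnR.le hnR.le, ← Real.rpow_add hnR,
      ← Real.rpow_add_one (ne_of_gt hnR)]
    congr 1
    ring
  -- assemble
  have hIoi : ∑ j : Fin n, ∑ k ∈ Finset.Ioi j, schatten p (x j - x k)
      = ∑ pr ∈ σ, schatten p (x pr.1 - x pr.2) := by
    rw [hσdef, Finset.sum_sigma]
  calc schatten p (∑ j, x j) + ∑ j : Fin n, ∑ k ∈ Finset.Ioi j, schatten p (x j - x k)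
      = schatten p (∑ j, x j) + ∑ pr ∈ σ, schatten p (x pr.1 - x pr.2) := by rw [hIoi]
    _ ≤ ∑ i, hMpsd.1.eigenvalues i ^ (p / 2) := stepB
    _ ≤ (Fintype.card (Fin n × Fin n) : ℝ) ^ (p / 2 - 1)
        * ∑ t : Fin n × Fin n, ∑ k, ((hBpsd t).1.eigenvalues k) ^ (p / 2) := stepC
    _ = (n : ℝ) ^ (p - 1) * ∑ j, schatten p (x j) := by
        rw [hcard, hRHSeq, ← mul_assoc, hpow]

end Cl5

end ClarksonAux

/-- Clarkson inequality for `n`-tuples with equal weights, `p ≥ 2`: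
`‖∑ xⱼ‖ₚᵖ + ∑_{j<k} ‖xⱼ-xₖ‖ₚᵖ ≤ n^{p-1} ∑ ‖xⱼ‖ₚᵖ`. -/
theorem clarkson_tuples_ge_two {m : ℕ} (n : ℕ) (x : Fin n → Matrix (Fin m) (Fin m) ℂ)
    (p : ℝ) (hp : 2 ≤ p) :
    schatten p (∑ j, x j) + ∑ j : Fin n, ∑ k ∈ Finset.Ioi j, schatten p (x j - x k)
      ≤ (n : ℝ) ^ (p - 1) * ∑ j, schatten p (x j) := by
  exact Cl5.clarkson n x p hp
end

section
/- Let x_0,…,x_{n-1} be m×m complex matrices, ω_j = e^{2πij/n} the n-th roots of unity, and 0 < p ≤ 2. Then (1/n) ∑_{k=0}^{n-1} ‖∑_{j=0}^{n-1} ω_j^k x_j‖_p^p ≤ ‖(∑_{j=0}^{n-1} x_j* x_j)^{1/2}‖_p^p ≤ n^{−p/2} ∑_{k=0}^{n-1} ‖∑_{j=0}^{n-1} ω_j^k x_j‖_p^p. -/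
open Matrix
open scoped NNReal ComplexOrder

section ClarksonInfra
open Polynomial

lemma monic_eq_of_reverse_eq {R : Type*} [CommRing R] {p q : R[X]}
    (hd : p.natDegree = q.natDegree) (h : p.reverse = q.reverse) : p = q := by
  ext i
  rcases le_or_gt i p.natDegree with hi | hi
  · have h1 := congrArg (fun r => Polynomial.coeff r (p.natDegree - i)) h
    simp only [Polynomial.coeff_reverse] at h1
    rwa [revAt_le (Nat.sub_le _ _), Nat.sub_sub_self hi, ← hd,
      revAt_le (Nat.sub_le _ _), Nat.sub_sub_self hi] at h1
  · rw [coeff_eq_zero_of_natDegree_lt hi, coeff_eq_zero_of_natDegree_lt (hd ▸ hi)]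

lemma my_charpoly_mul_comm {ι : Type*} [Fintype ι] [DecidableEq ι] (A B : Matrix ι ι ℂ) :
    (A * B).charpoly = (B * A).charpoly := by
  apply monic_eq_of_reverse_eq
  · rw [Matrix.charpoly_natDegree_eq_dim, Matrix.charpoly_natDegree_eq_dim]
  · rw [Matrix.reverse_charpoly, Matrix.reverse_charpoly]
    unfold Matrix.charpolyRev
    have h1 : (1 : Matrix ι ι ℂ[X]) - (X : ℂ[X]) • (A * B).map C
        = 1 + (-((X : ℂ[X]) • A.map C)) * B.map C := by
      rw [Matrix.map_mul (f := (C : ℂ →+* ℂ[X])), neg_mul, Matrix.smul_mul, sub_eq_add_neg]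
    have h2 : (1 : Matrix ι ι ℂ[X]) - (X : ℂ[X]) • (B * A).map C
        = 1 + B.map C * (-((X : ℂ[X]) • A.map C)) := by
      rw [Matrix.map_mul (f := (C : ℂ →+* ℂ[X])), mul_neg, Matrix.mul_smul, sub_eq_add_neg]
    rw [h1, h2, Matrix.det_one_add_mul_comm]

lemma my_charpoly_diagonal {ι : Type*} [Fintype ι] [DecidableEq ι] (d : ι → ℂ) :
    (Matrix.diagonal d).charpoly = ∏ i, (X - C (d i)) := by
  have h : charmatrix (Matrix.diagonal d) = Matrix.diagonal (fun i => X - C (d i)) := by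
    refine Matrix.ext fun i j => ?_
    rcases eq_or_ne i j with rfl | hij
    · rw [charmatrix_apply_eq, Matrix.diagonal_apply_eq, Matrix.diagonal_apply_eq]
    · rw [charmatrix_apply_ne _ _ _ hij, Matrix.diagonal_apply_ne _ hij,
        Matrix.diagonal_apply_ne _ hij, map_zero, neg_zero]
  rw [Matrix.charpoly, h, Matrix.det_diagonal]

lemma my_charpoly_conj {ι : Type*} [Fintype ι] [DecidableEq ι] {U : Matrix ι ι ℂ}
    (hU : U ∈ Matrix.unitaryGroup ι ℂ) (D : Matrix ι ι ℂ) :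
    (U * D * star U).charpoly = D.charpoly := by
  rw [my_charpoly_mul_comm, ← mul_assoc,
    (Matrix.mem_unitaryGroup_iff').mp hU, one_mul]

lemma my_star_mul_self_mul_eq_diagonal {ι : Type*} [Fintype ι] [DecidableEq ι]
    {A : Matrix ι ι ℂ} (hA : A.IsHermitian) :
    star (hA.eigenvectorUnitary : Matrix ι ι ℂ) * A * (hA.eigenvectorUnitary : Matrix ι ι ℂ)
      = Matrix.diagonal (RCLike.ofReal ∘ hA.eigenvalues) := by
  rw [← hA.conjStarAlgAut_star_eigenvectorUnitary, Unitary.conjStarAlgAut_apply,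
    Unitary.coe_star, star_star]


section part2
variable {ι : Type*} [Fintype ι] [DecidableEq ι]


lemma charpoly_eq_prod {A : Matrix ι ι ℂ} (hA : A.IsHermitian) :
    A.charpoly = ((Finset.univ.val.map hA.eigenvalues).map
      (fun r : ℝ => X - C (r : ℂ))).prod := by
  conv_lhs => rw [hA.spectral_theorem, Unitary.conjStarAlgAut_apply]
  rw [my_charpoly_conj hA.eigenvectorUnitary.2, my_charpoly_diagonal,
    Multiset.map_map]
  rfl

lemma eig_multiset {A : Matrix ι ι ℂ} (hA : A.IsHermitian) (μ : Multiset ℝ)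
    (h : A.charpoly = (μ.map (fun r : ℝ => X - C (r : ℂ))).prod) :
    Finset.univ.val.map hA.eigenvalues = μ := by
  have h1 := (charpoly_eq_prod hA).symm.trans h
  have key : ∀ s : Multiset ℝ, (s.map (fun r : ℝ => X - C (r : ℂ))).prod
      = ((s.map (fun r : ℝ => (r : ℂ))).map (fun c : ℂ => X - C c)).prod := by
    intro s; rw [Multiset.map_map]; rfl
  rw [key, key] at h1
  have h2 := congrArg Polynomial.roots h1
  rw [Polynomial.roots_multiset_prod_X_sub_C, Polynomial.roots_multiset_prod_X_sub_C] at h2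
  exact Multiset.map_injective Complex.ofReal_injective h2

noncomputable def esum (g : ℝ → ℝ) {A : Matrix ι ι ℂ} (hA : A.IsHermitian) : ℝ :=
  ∑ i, g (hA.eigenvalues i)

lemma esum_eq_of_charpoly {A : Matrix ι ι ℂ} (hA : A.IsHermitian) (μ : Multiset ℝ)
    (h : A.charpoly = (μ.map (fun r : ℝ => X - C (r : ℂ))).prod) (g : ℝ → ℝ) :
    esum g hA = (μ.map g).sum := by
  rw [← eig_multiset hA μ h, Multiset.map_map]
  rfl

end part2


section part3
variable {ι : Type*} [Fintype ι] [DecidableEq ι]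

lemma mul_star_re (z : ℂ) : (z * star z).re = Complex.normSq z := by
  rw [show star z = starRingEnd ℂ z from rfl, Complex.mul_conj]
  simp

lemma star_mul_re (z : ℂ) : (star z * z).re = Complex.normSq z := by
  rw [mul_comm]; exact mul_star_re z

lemma unitary_entry_sums {W : Matrix ι ι ℂ} (hW : W ∈ Matrix.unitaryGroup ι ℂ) :
    (∀ j, ∑ i, Complex.normSq (W j i) = 1) ∧ (∀ i, ∑ j, Complex.normSq (W j i) = 1) := by
  constructor
  · intro j
    have h := congrArg (fun M => (M j j).re) ((Matrix.mem_unitaryGroup_iff).mp hW)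
    simp only [Matrix.mul_apply, Matrix.star_apply, Matrix.one_apply_eq, Complex.re_sum,
      mul_star_re] at h
    exact h
  · intro i
    have h := congrArg (fun M => (M i i).re) ((Matrix.mem_unitaryGroup_iff').mp hW)
    simp only [Matrix.mul_apply, Matrix.star_apply, Matrix.one_apply_eq, Complex.re_sum,
      star_mul_re] at h
    exact h

lemma peierls {g : ℝ → ℝ} (hg : ConcaveOn ℝ (Set.Ici 0) g)
    {A : Matrix ι ι ℂ} (hA : A.PosSemidef) {U : Matrix ι ι ℂ}
    (hU : U ∈ Matrix.unitaryGroup ι ℂ) :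
    (∑ i, g (hA.1.eigenvalues i)) ≤ ∑ i, g (((star U * A * U) i i).re) := by
  set V : Matrix ι ι ℂ := (hA.1.eigenvectorUnitary : Matrix ι ι ℂ) with hV
  have hVmem : V ∈ Matrix.unitaryGroup ι ℂ := hA.1.eigenvectorUnitary.2
  set lam := hA.1.eigenvalues with hlam
  set W : Matrix ι ι ℂ := star V * U with hWdef
  have hWmem : W ∈ Matrix.unitaryGroup ι ℂ := by
    rw [Matrix.mem_unitaryGroup_iff]
    have : star W = star U * V := by rw [hWdef, StarMul.star_mul, star_star]
    rw [this, hWdef, mul_assoc, ← mul_assoc U, (Matrix.mem_unitaryGroup_iff).mp hU, one_mul,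
      (Matrix.mem_unitaryGroup_iff').mp hVmem]
  have hdiag : star U * A * U = star W * Matrix.diagonal (RCLike.ofReal ∘ lam) * W := by
    have hsw : star W = star U * V := by rw [hWdef, StarMul.star_mul, star_star]
    conv_lhs => rw [hA.1.spectral_theorem, Unitary.conjStarAlgAut_apply]
    rw [hsw, hWdef]
    simp only [mul_assoc]
    rfl
  have key : ∀ i, ((star U * A * U) i i).re = ∑ j, Complex.normSq (W j i) * lam j := by
    intro i
    rw [hdiag, Matrix.mul_apply, Complex.re_sum]
    refine Finset.sum_congr rfl fun j _ => ?_
    rw [Matrix.mul_diagonal, Matrix.star_apply]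
    have hfun : (RCLike.ofReal ∘ lam : ι → ℂ) j = ((lam j : ℝ) : ℂ) := rfl
    have hz : star (W j i) * ((lam j : ℝ) : ℂ) * W j i
        = ((Complex.normSq (W j i) * lam j : ℝ) : ℂ) := by
      have h1 : star (W j i) * ((lam j : ℝ) : ℂ) * W j i
          = ((lam j : ℝ) : ℂ) * (W j i * star (W j i)) := by ring
      rw [h1, show (star (W j i) : ℂ) = starRingEnd ℂ (W j i) from rfl,
        Complex.mul_conj, ← Complex.ofReal_mul, mul_comm]
    rw [hfun, hz, Complex.ofReal_re]
  have rowsum := (unitary_entry_sums hWmem).1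
  have colsum := (unitary_entry_sums hWmem).2
  calc ∑ j, g (lam j) = ∑ j, (∑ i, Complex.normSq (W j i)) * g (lam j) := by
        refine Finset.sum_congr rfl fun j _ => ?_
        rw [rowsum j, one_mul]
    _ = ∑ i, ∑ j, Complex.normSq (W j i) * g (lam j) := by
        rw [Finset.sum_comm]
        exact Finset.sum_congr rfl fun j _ => by rw [Finset.sum_mul]
    _ ≤ ∑ i, g (((star U * A * U) i i).re) := by
        refine Finset.sum_le_sum fun i _ => ?_
        rw [key i]
        have := hg.le_map_sum (t := Finset.univ) (w := fun j => Complex.normSq (W j i))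
          (p := lam) (fun j _ => Complex.normSq_nonneg _) (colsum i)
          (fun j _ => hA.eigenvalues_nonneg j)
        simpa [smul_eq_mul] using this
end part3

section part4
variable {ι : Type*} [Fintype ι] [DecidableEq ι]

lemma psd_diag_re_nonneg {A : Matrix ι ι ℂ} (hA : A.PosSemidef) (i : ι) :
    0 ≤ (A i i).re := by
  have h := hA.diag_nonneg (i := i)
  simpa using (Complex.le_def.mp h).1

lemma jensen_trace {g : ℝ → ℝ} (hg : ConcaveOn ℝ (Set.Ici 0) g) {n : ℕ} (hn : 0 < n)
    (H : Fin n → Matrix ι ι ℂ) (hH : ∀ k, (H k).PosSemidef)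
    {M : Matrix ι ι ℂ} (hM : M.PosSemidef) (hsum : ∑ k, H k = (n : ℂ) • M) :
    ∑ k, esum g (hH k).1 ≤ n * esum g hM.1 := by
  set U : Matrix ι ι ℂ := (hM.1.eigenvectorUnitary : Matrix ι ι ℂ) with hUdef
  have hU : U ∈ Matrix.unitaryGroup ι ℂ := hM.1.eigenvectorUnitary.2
  set lam := hM.1.eigenvalues with hlam
  set c : Fin n → ι → ℝ := fun k i => ((star U * H k * U) i i).re with hc
  have hpsd : ∀ k, (star U * H k * U).PosSemidef := by
    intro k
    rw [Matrix.star_eq_conjTranspose]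
    exact (hH k).conjTranspose_mul_mul_same U
  have hc0 : ∀ k i, 0 ≤ c k i := fun k i => psd_diag_re_nonneg (hpsd k) i
  have hsum_c : ∀ i, ∑ k, c k i = n * lam i := by
    intro i
    have h1 : ∑ k, (star U * H k * U) = (n : ℂ) • (star U * M * U) := by
      calc ∑ k, (star U * H k * U) = star U * (∑ k, H k) * U := by
            rw [Finset.mul_sum, Finset.sum_mul]
        _ = (n : ℂ) • (star U * M * U) := by
            rw [hsum, Matrix.mul_smul, Matrix.smul_mul]
    have h2 := congrArg (fun Z => (Z i i).re) h1
    simp only [Matrix.sum_apply, Complex.re_sum] at h2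
    rw [hc]
    simp only []
    rw [h2, my_star_mul_self_mul_eq_diagonal hM.1]
    simp [Matrix.smul_apply, Matrix.diagonal_apply_eq]
    exact Or.inl rfl
  calc ∑ k, esum g (hH k).1 ≤ ∑ k, ∑ i, g (c k i) := by
        refine Finset.sum_le_sum fun k _ => ?_
        exact peierls hg (hH k) hU
    _ = ∑ i, ∑ k, g (c k i) := Finset.sum_comm
    _ ≤ ∑ i, (n : ℝ) * g (lam i) := by
        refine Finset.sum_le_sum fun i _ => ?_
        have hjen := hg.le_map_sum (t := (Finset.univ : Finset (Fin n)))
          (w := fun _ => (n : ℝ)⁻¹) (p := fun k => c k i)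
          (fun k _ => by positivity)
          (by simp [Finset.card_univ]; field_simp)
          (fun k _ => hc0 k i)
        have hnpos : (0:ℝ) < n := by exact_mod_cast hn
        have heq : ∑ k, (n : ℝ)⁻¹ • c k i = lam i := by
          simp only [smul_eq_mul, ← Finset.mul_sum]
          rw [hsum_c i]
          field_simp
        simp only [smul_eq_mul] at hjen heq
        rw [heq] at hjen
        have h3 : ∑ k, g (c k i) = n * ∑ k, (n:ℝ)⁻¹ * g (c k i) := by
          rw [Finset.mul_sum]
          refine Finset.sum_congr rfl fun k _ => ?_
          field_simp
        rw [h3]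
        exact mul_le_mul_of_nonneg_left hjen (le_of_lt hnpos)
    _ = n * esum g hM.1 := by rw [esum, Finset.mul_sum]
end part4

section part5
variable {ι : Type*} [Fintype ι] [DecidableEq ι]

lemma charpoly_zero_mat : (0 : Matrix ι ι ℂ).charpoly = (X : ℂ[X]) ^ Fintype.card ι := by
  rw [← Matrix.diagonal_zero, my_charpoly_diagonal]
  simp [Finset.prod_const, Finset.card_univ]

lemma esum_congr {g : ℝ → ℝ} {A B : Matrix ι ι ℂ} (h : A = B) (hA : A.IsHermitian)
    (hB : B.IsHermitian) : esum g hA = esum g hB := by subst h; rfl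

open scoped MatrixOrder in
lemma rotfeld_add {g : ℝ → ℝ} (hg : ConcaveOn ℝ (Set.Ici 0) g) (hg0 : g 0 = 0)
    {A B : Matrix ι ι ℂ} (hA : A.PosSemidef) (hB : B.PosSemidef) :
    esum g (hA.add hB).1 ≤ esum g hA.1 + esum g hB.1 := by
  set sA := CFC.sqrt A with hsA
  set sB := CFC.sqrt B with hsB
  have hsAH : sAᴴ = sA := (CFC.sqrt_nonneg A).posSemidef.1
  have hsBH : sBᴴ = sB := (CFC.sqrt_nonneg B).posSemidef.1
  have hsAA : sA * sA = A := CFC.sqrt_mul_sqrt_self A hA.nonneg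
  have hsBB : sB * sB = B := CFC.sqrt_mul_sqrt_self B hB.nonneg
  set Y : Matrix (ι ⊕ ι) (ι ⊕ ι) ℂ := fromBlocks sA 0 sB 0 with hY
  have hYH : Yᴴ = fromBlocks sA sB 0 0 := by
    rw [hY, Matrix.fromBlocks_conjTranspose, hsAH, hsBH]
    simp
  have h1 : Yᴴ * Y = fromBlocks (A + B) 0 0 0 := by
    rw [hYH, hY, Matrix.fromBlocks_multiply]
    simp [hsAA, hsBB]
  have h2 : Y * Yᴴ = fromBlocks A (sA * sB) (sB * sA) B := by
    rw [hYH, hY, Matrix.fromBlocks_multiply]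
    simp [hsAA, hsBB]
  set μ : Multiset ℝ := (Finset.univ.val.map (hA.add hB).1.eigenvalues)
      + Multiset.replicate (Fintype.card ι) 0 with hμ
  have hchar1 : (Yᴴ * Y).charpoly = (μ.map (fun r : ℝ => X - C (r : ℂ))).prod := by
    rw [h1, Matrix.charpoly_fromBlocks_zero₂₁, charpoly_zero_mat, hμ, Multiset.map_add,
      Multiset.prod_add, Multiset.map_replicate, Multiset.prod_replicate,
      charpoly_eq_prod (hA.add hB).1]
    norm_num
  have hchar2 : (Y * Yᴴ).charpoly = (μ.map (fun r : ℝ => X - C (r : ℂ))).prod := by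
    rw [← my_charpoly_mul_comm]; exact hchar1
  have hPSD1 : (Y * Yᴴ).PosSemidef := Matrix.posSemidef_self_mul_conjTranspose Y
  have he2 : esum g hPSD1.1 = esum g (hA.add hB).1 := by
    rw [esum_eq_of_charpoly hPSD1.1 μ hchar2 g, hμ, Multiset.map_add, Multiset.sum_add,
      Multiset.map_replicate, Multiset.sum_replicate]
    simp only [hg0, smul_zero, add_zero]
    rw [esum, Multiset.map_map]
    rfl
  set UA := (hA.1.eigenvectorUnitary : Matrix ι ι ℂ) with hUA
  set UB := (hB.1.eigenvectorUnitary : Matrix ι ι ℂ) with hUB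
  have hUAm : UA ∈ Matrix.unitaryGroup ι ℂ := hA.1.eigenvectorUnitary.2
  have hUBm : UB ∈ Matrix.unitaryGroup ι ℂ := hB.1.eigenvectorUnitary.2
  set U2 : Matrix (ι ⊕ ι) (ι ⊕ ι) ℂ := fromBlocks UA 0 0 UB with hU2def
  have hstarU2 : star U2 = fromBlocks (star UA) 0 0 (star UB) := by
    rw [hU2def, Matrix.star_eq_conjTranspose, Matrix.fromBlocks_conjTranspose]
    simp [Matrix.star_eq_conjTranspose]
  have hU2 : U2 ∈ Matrix.unitaryGroup (ι ⊕ ι) ℂ := by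
    rw [Matrix.mem_unitaryGroup_iff, hstarU2, hU2def, Matrix.fromBlocks_multiply]
    rw [show UA * star UA = 1 from (Matrix.mem_unitaryGroup_iff).mp hUAm,
      show UB * star UB = 1 from (Matrix.mem_unitaryGroup_iff).mp hUBm]
    simp [Matrix.fromBlocks_one]
  have hpin := peierls hg hPSD1 hU2
  have hblock : star U2 * (Y * Yᴴ) * U2
      = fromBlocks (Matrix.diagonal (RCLike.ofReal ∘ hA.1.eigenvalues))
          (star UA * (sA * sB) * UB) (star UB * (sB * sA) * UA)
          (Matrix.diagonal (RCLike.ofReal ∘ hB.1.eigenvalues)) := by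
    rw [h2, hstarU2, hU2def, Matrix.fromBlocks_multiply, Matrix.fromBlocks_multiply]
    rw [← my_star_mul_self_mul_eq_diagonal hA.1, ← my_star_mul_self_mul_eq_diagonal hB.1]
    congr 1 <;> simp [Matrix.mul_assoc] <;> rfl
  have hdiagsum : ∑ i : ι ⊕ ι, g (((star U2 * (Y * Yᴴ) * U2) i i).re)
      = esum g hA.1 + esum g hB.1 := by
    rw [hblock, Fintype.sum_sum_type]
    congr 1
    · refine Finset.sum_congr rfl fun i _ => ?_
      rw [Matrix.fromBlocks_apply₁₁, Matrix.diagonal_apply_eq]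
      norm_num [esum]
    · refine Finset.sum_congr rfl fun i _ => ?_
      rw [Matrix.fromBlocks_apply₂₂, Matrix.diagonal_apply_eq]
      norm_num [esum]
  calc esum g (hA.add hB).1 = esum g hPSD1.1 := he2.symm
    _ ≤ ∑ i : ι ⊕ ι, g (((star U2 * (Y * Yᴴ) * U2) i i).re) := hpin
    _ = esum g hA.1 + esum g hB.1 := hdiagsum

end part5

section part6
variable {ι : Type*} [Fintype ι] [DecidableEq ι]

lemma esum_zero {g : ℝ → ℝ} (hg0 : g 0 = 0) (h0 : (0 : Matrix ι ι ℂ).IsHermitian) :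
    esum g h0 = 0 := by
  rw [esum_eq_of_charpoly h0 (Multiset.replicate (Fintype.card ι) 0)
    (by rw [charpoly_zero_mat, Multiset.map_replicate, Multiset.prod_replicate]; norm_num) g]
  simp [Multiset.map_replicate, hg0]

lemma psd_sum {κ : Type*} (s : Finset κ) (H : κ → Matrix ι ι ℂ)
    (hH : ∀ k, (H k).PosSemidef) : (∑ k ∈ s, H k).PosSemidef := by
  classical
  induction s using Finset.cons_induction with
  | empty => simpa using Matrix.PosSemidef.zero
  | cons a s ha ih => rw [Finset.sum_cons]; exact (hH a).add ih

lemma rotfeld_sum {g : ℝ → ℝ} (hg : ConcaveOn ℝ (Set.Ici 0) g) (hg0 : g 0 = 0)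
    {κ : Type*} (s : Finset κ) (H : κ → Matrix ι ι ℂ) (hH : ∀ k, (H k).PosSemidef) :
    esum g (psd_sum s H hH).1 ≤ ∑ k ∈ s, esum g (hH k).1 := by
  classical
  induction s using Finset.cons_induction with
  | empty =>
    rw [esum_congr (Finset.sum_empty) (psd_sum ∅ H hH).1 Matrix.PosSemidef.zero.1,
      esum_zero hg0, Finset.sum_empty]
  | cons a s ha ih =>
    calc esum g (psd_sum (Finset.cons a s ha) H hH).1
        = esum g ((hH a).add (psd_sum s H hH)).1 :=
          esum_congr (Finset.sum_cons ha) (psd_sum (Finset.cons a s ha) H hH).1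
            ((hH a).add (psd_sum s H hH)).1
      _ ≤ esum g (hH a).1 + esum g (psd_sum s H hH).1 := rotfeld_add hg hg0 (hH a) (psd_sum s H hH)
      _ ≤ esum g (hH a).1 + ∑ k ∈ s, esum g (hH k).1 := by linarith
      _ = ∑ k ∈ Finset.cons a s ha, esum g (hH k).1 := (Finset.sum_cons (M := ℝ) (f := fun k => esum g (hH k).1) ha).symm
-- scaling
lemma esum_smul_psd {g : ℝ → ℝ} {M : Matrix ι ι ℂ} (hM : M.PosSemidef) (c : ℝ)
    {N : Matrix ι ι ℂ} (hN : N.IsHermitian) (hNM : N = (c : ℂ) • M) :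
    esum g hN = ∑ i, g (c * hM.1.eigenvalues i) := by
  have hchar : N.charpoly = (((Finset.univ.val.map
      (fun i => c * hM.1.eigenvalues i))).map (fun r : ℝ => X - C (r : ℂ))).prod := by
    have hsp : N = (hM.1.eigenvectorUnitary : Matrix ι ι ℂ)
        * ((c : ℂ) • Matrix.diagonal (RCLike.ofReal ∘ hM.1.eigenvalues))
        * star (hM.1.eigenvectorUnitary : Matrix ι ι ℂ) := by
      rw [hNM]
      conv_lhs => rw [hM.1.spectral_theorem, Unitary.conjStarAlgAut_apply]
      rw [Matrix.mul_smul, Matrix.smul_mul]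
    rw [hsp, my_charpoly_conj hM.1.eigenvectorUnitary.2]
    have hd : ((c : ℂ) • Matrix.diagonal (RCLike.ofReal ∘ hM.1.eigenvalues) : Matrix ι ι ℂ)
        = Matrix.diagonal (fun i => ((c * hM.1.eigenvalues i : ℝ) : ℂ)) := by
      ext i j
      rcases eq_or_ne i j with rfl | hij
      · simp [Matrix.smul_apply, Matrix.diagonal_apply_eq, smul_eq_mul, Complex.ofReal_mul]
      · simp [Matrix.smul_apply, Matrix.diagonal_apply_ne _ hij]
    rw [hd, my_charpoly_diagonal]
    rw [Multiset.map_map]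
    rfl
  rw [esum_eq_of_charpoly hN _ hchar g, Multiset.map_map]
  rfl
end part6


lemma orth_sum {n : ℕ} (hn : 0 < n) (ω : Fin n → ℂ)
    (hω : ∀ j : Fin n, ω j = Complex.exp (2 * Real.pi * Complex.I * j / n)) (j l : Fin n) :
    ∑ k : Fin n, (starRingEnd ℂ) (ω j ^ (k : ℕ)) * ω l ^ (k : ℕ)
      = if j = l then (n : ℂ) else 0 := by
  have hnC : (n : ℂ) ≠ 0 := by exact_mod_cast hn.ne'
  have hπ : ((Real.pi : ℝ) : ℂ) ≠ 0 := by exact_mod_cast Real.pi_ne_zero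
  set ζ : ℂ := (starRingEnd ℂ) (ω j) * ω l with hζ
  have hterm : ∀ k : Fin n, (starRingEnd ℂ) (ω j ^ (k : ℕ)) * ω l ^ (k : ℕ) = ζ ^ (k : ℕ) := by
    intro k; rw [map_pow, ← mul_pow]
  have hconj : (starRingEnd ℂ) (2 * (Real.pi : ℂ) * Complex.I * ((j : ℕ) : ℂ) / (n : ℂ))
      = -(2 * (Real.pi : ℂ) * Complex.I * ((j : ℕ) : ℂ) / (n : ℂ)) := by
    simp [map_div₀, _root_.map_mul, Complex.conj_I, map_ofNat]
    ring
  have hζval : ζ = Complex.exp (2 * Real.pi * Complex.I * (((l : ℕ) : ℂ) - ((j : ℕ) : ℂ)) / n) := by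
    rw [hζ, hω, hω, ← Complex.exp_conj, ← Complex.exp_add]
    push_cast at hconj ⊢
    rw [hconj]
    congr 1
    field_simp
    ring
  simp only [hterm]
  rcases eq_or_ne j l with rfl | hjl
  · have h1 : ζ = 1 := by rw [hζval]; simp
    simp [h1]
  · have hζn : ζ ^ n = 1 := by
      rw [hζval, ← Complex.exp_nat_mul]
      have harg : (n : ℂ) * (2 * Real.pi * Complex.I * (((l : ℕ) : ℂ) - ((j : ℕ) : ℂ)) / n)
          = (((l : ℤ) - (j : ℤ) : ℤ) : ℂ) * (2 * Real.pi * Complex.I) := by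
        push_cast
        field_simp
      rw [harg, Complex.exp_int_mul_two_pi_mul_I]
    have hζ1 : ζ ≠ 1 := by
      intro h1
      rw [hζval, Complex.exp_eq_one_iff] at h1
      obtain ⟨t, ht⟩ := h1
      have c0 : 2 * ((Real.pi : ℝ) : ℂ) * Complex.I ≠ 0 := by
        simp [hπ, Complex.I_ne_zero]
      have ht' : 2 * ((Real.pi : ℝ) : ℂ) * Complex.I * (((l : ℕ) : ℂ) - ((j : ℕ) : ℂ))
          = 2 * ((Real.pi : ℝ) : ℂ) * Complex.I * ((t : ℂ) * (n : ℂ)) := by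
        have := ht
        field_simp at this
        linear_combination (2 * ((Real.pi : ℝ) : ℂ) * Complex.I) * this
      have h2 : (((l : ℕ) : ℂ) - ((j : ℕ) : ℂ)) = (t : ℂ) * (n : ℂ) :=
        mul_left_cancel₀ c0 ht'
      have h3 : ((l : ℕ) : ℤ) - ((j : ℕ) : ℤ) = t * (n : ℤ) := by exact_mod_cast h2
      have h4 : ((l : ℕ) : ℤ) - ((j : ℕ) : ℤ) = 0 := by
        refine Int.eq_zero_of_abs_lt_dvd ⟨t, by rw [h3, mul_comm]⟩ ?_
        have hl := l.isLt
        have hj := j.isLt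
        rw [abs_lt]
        omega
      have : (l : ℕ) = (j : ℕ) := by omega
      exact hjl (Fin.ext this.symm)
    rw [Fin.sum_univ_eq_sum_range (fun k => ζ ^ k) n, geom_sum_eq hζ1, hζn]
    simp [hjl]

end ClarksonInfra

lemma gram_sum {m n : ℕ} (hn : 0 < n) (x : Fin n → Matrix (Fin m) (Fin m) ℂ) (ω : Fin n → ℂ)
    (hω : ∀ j : Fin n, ω j = Complex.exp (2 * Real.pi * Complex.I * j / n)) :
    ∑ k : Fin n, (∑ j, ω j ^ (k : ℕ) • x j)ᴴ * (∑ j, ω j ^ (k : ℕ) • x j)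
      = (n : ℂ) • ∑ j, (x j)ᴴ * x j := by
  have expand : ∀ k : Fin n, (∑ j, ω j ^ (k : ℕ) • x j)ᴴ * (∑ j, ω j ^ (k : ℕ) • x j)
      = ∑ j, ∑ l, ((starRingEnd ℂ) (ω j ^ (k : ℕ)) * ω l ^ (k : ℕ)) • ((x j)ᴴ * x l) := by
    intro k
    rw [Matrix.conjTranspose_sum, Finset.sum_mul_sum]
    refine Finset.sum_congr rfl fun j _ => Finset.sum_congr rfl fun l _ => ?_
    rw [Matrix.conjTranspose_smul, Matrix.smul_mul, Matrix.mul_smul, smul_smul]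
    rfl
  simp only [expand]
  rw [Finset.sum_comm]
  have swap2 : ∀ j, ∑ k : Fin n, ∑ l, ((starRingEnd ℂ) (ω j ^ (k : ℕ)) * ω l ^ (k : ℕ))
        • ((x j)ᴴ * x l)
      = ∑ l, (∑ k : Fin n, (starRingEnd ℂ) (ω j ^ (k : ℕ)) * ω l ^ (k : ℕ)) • ((x j)ᴴ * x l) := by
    intro j
    rw [Finset.sum_comm]
    exact Finset.sum_congr rfl fun l _ => (Finset.sum_smul).symm
  simp only [swap2]
  simp only [orth_sum hn ω hω]
  rw [Finset.smul_sum]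
  refine Finset.sum_congr rfl fun j _ => ?_
  rw [Finset.sum_eq_single j]
  · simp
  · intro b _ hb
    simp [Ne.symm hb]
  · intro h; exact absurd (Finset.mem_univ j) h


/-- Refined Clarkson inequalities for `0 < p ≤ 2`:
`(1/n) ∑ₖ ‖∑ⱼ ωⱼᵏ xⱼ‖ₚᵖ ≤ ‖(∑ⱼ xⱼᴴxⱼ)^{1/2}‖ₚᵖ ≤ n^{-p/2} ∑ₖ ‖∑ⱼ ωⱼᵏ xⱼ‖ₚᵖ`. -/
theorem refined_clarkson_le_two {m : ℕ} (n : ℕ) (hn : 0 < n)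
    (x : Fin n → Matrix (Fin m) (Fin m) ℂ) (ω : Fin n → ℂ)
    (hω : ∀ j : Fin n, ω j = Complex.exp (2 * Real.pi * Complex.I * j / n))
    (p : ℝ) (hp0 : 0 < p) (hp2 : p ≤ 2) :
    (1 / (n : ℝ)) * ∑ k : Fin n, schatten p (∑ j, ω j ^ (k : ℕ) • x j)
        ≤ traceRpow (p / 2) (∑ j, (x j)ᴴ * x j)
            (hermSum _ fun j => Matrix.isHermitian_conjTranspose_mul_self (x j)) ∧
    traceRpow (p / 2) (∑ j, (x j)ᴴ * x j)
        (hermSum _ fun j => Matrix.isHermitian_conjTranspose_mul_self (x j))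
      ≤ (n : ℝ) ^ (-(p / 2)) * ∑ k : Fin n, schatten p (∑ j, ω j ^ (k : ℕ) • x j) := by
  have hq0 : 0 < p / 2 := by positivity
  have hq1 : p / 2 ≤ 1 := by linarith
  set g : ℝ → ℝ := fun t => t ^ (p / 2) with hgdef
  have hgc : ConcaveOn ℝ (Set.Ici 0) g := Real.concaveOn_rpow hq0.le hq1
  have hg0 : g 0 = 0 := Real.zero_rpow hq0.ne'
  have hApsd : ∀ k : Fin n,
      ((∑ j, ω j ^ (k : ℕ) • x j)ᴴ * (∑ j, ω j ^ (k : ℕ) • x j)).PosSemidef :=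
    fun k => Matrix.posSemidef_conjTranspose_mul_self _
  have hSpsd : (∑ j, (x j)ᴴ * x j).PosSemidef :=
    psd_sum Finset.univ _ (fun j => Matrix.posSemidef_conjTranspose_mul_self (x j))
  have horth := gram_sum hn x ω hω
  have hnR : (0 : ℝ) < n := by exact_mod_cast hn
  have hsch : ∀ k : Fin n, schatten p (∑ j, ω j ^ (k : ℕ) • x j) = esum g (hApsd k).1 :=
    fun k => rfl
  have htr : traceRpow (p / 2) (∑ j, (x j)ᴴ * x j)
      (hermSum _ fun j => Matrix.isHermitian_conjTranspose_mul_self (x j)) = esum g hSpsd.1 := rfl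
  simp only [hsch, htr]
  constructor
  · -- left inequality
    have h1 := jensen_trace hgc hn _ hApsd hSpsd horth
    rw [div_mul_eq_mul_div, one_mul, div_le_iff₀ hnR, mul_comm (esum g hSpsd.1) (n:ℝ)]
    exact h1
  · -- right inequality
    have h2 := rotfeld_sum hgc hg0 Finset.univ _ hApsd
    have h3 : esum g (psd_sum Finset.univ _ hApsd).1 = (n : ℝ) ^ (p / 2) * esum g hSpsd.1 := by
      rw [esum_smul_psd hSpsd (n : ℝ) (psd_sum Finset.univ _ hApsd).1
        (by rw [horth]; norm_num)]
      rw [esum, Finset.mul_sum]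
      refine Finset.sum_congr rfl fun i _ => ?_
      rw [hgdef]
      simp only []
      rw [Real.mul_rpow hnR.le (hSpsd.eigenvalues_nonneg i)]
    rw [h3] at h2
    have h4 : (n : ℝ) ^ (-(p / 2)) * ((n : ℝ) ^ (p / 2) * esum g hSpsd.1) = esum g hSpsd.1 := by
      rw [← mul_assoc, ← Real.rpow_add hnR]
      simp
    calc esum g hSpsd.1 = (n : ℝ) ^ (-(p / 2)) * ((n : ℝ) ^ (p / 2) * esum g hSpsd.1) := h4.symm
      _ ≤ (n : ℝ) ^ (-(p / 2)) * ∑ k, esum g (hApsd k).1 := by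
          refine mul_le_mul_of_nonneg_left h2 ?_
          positivity
end

section
/- Let f : ℝ≥0 → ℝ≥0 be defined by f(t) = e^{t} − 1, which is continuous, increasing, convex, and satisfies f(0) = 0. For positive semidefinite n×n complex matrices x and y and α ∈ (0,1): trace(exp(αx + (1−α)y) − I) ≤ α·trace(exp(x) − I) + (1−α)·trace(exp(y) − I), where exp is the matrix exponential and I the identity matrix. -/
open Matrix
open scoped ComplexOrder

namespace TraceExpAux

variable {n : ℕ}

lemma exp_hermitian {A : Matrix (Fin n) (Fin n) ℂ} (hA : A.IsHermitian) :
    NormedSpace.exp A =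
      (hA.eigenvectorUnitary : Matrix (Fin n) (Fin n) ℂ) *
        Matrix.diagonal (fun i => Complex.exp (hA.eigenvalues i)) *
        star (hA.eigenvectorUnitary : Matrix (Fin n) (Fin n) ℂ) := by
  set U : Matrix (Fin n) (Fin n) ℂ := (hA.eigenvectorUnitary : Matrix (Fin n) (Fin n) ℂ) with hUdef
  have hU : IsUnit U := ⟨Unitary.toUnits hA.eigenvectorUnitary, rfl⟩
  have hinv : U⁻¹ = star U := Matrix.inv_eq_left_inv (Unitary.coe_star_mul_self _)
  have hdiag : NormedSpace.exp
      (Matrix.diagonal (RCLike.ofReal ∘ hA.eigenvalues) : Matrix (Fin n) (Fin n) ℂ) =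
      Matrix.diagonal (fun i => Complex.exp (hA.eigenvalues i)) := by
    rw [Matrix.exp_diagonal]
    funext i
    rw [Pi.exp_def, ← Complex.exp_eq_exp_ℂ]
    rfl
  have hconj := Matrix.exp_conj U
    (Matrix.diagonal (RCLike.ofReal ∘ hA.eigenvalues)) hU
  rw [hinv] at hconj
  conv_lhs => rw [hA.spectral_theorem, Unitary.conjStarAlgAut_apply]
  rw [← hUdef, hconj, hdiag]

lemma entry_conj (B : Matrix (Fin n) (Fin n) ℂ) (d : Fin n → ℝ) (i : Fin n) :
    ((star B * Matrix.diagonal (fun j => (d j : ℂ)) * B) i i).re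
      = ∑ j, d j * Complex.normSq (B j i) := by
  have key : ∀ (z : ℂ) (c : ℝ), (star z * (c : ℂ) * z).re = c * Complex.normSq z := by
    intro z c
    rw [mul_comm (star z) _, mul_assoc, Complex.star_def, mul_comm ((starRingEnd ℂ) z) z,
      Complex.mul_conj, ← Complex.ofReal_mul, Complex.ofReal_re]
  rw [Matrix.mul_apply, Complex.re_sum]
  refine Finset.sum_congr rfl fun j _ => ?_
  rw [Matrix.mul_diagonal, Matrix.star_apply, key]

lemma col_norm {B : Matrix (Fin n) (Fin n) ℂ} (hB : B ∈ Matrix.unitaryGroup (Fin n) ℂ)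
    (i : Fin n) : ∑ j, Complex.normSq (B j i) = 1 := by
  have h1 : star B * B = 1 := (Unitary.mem_iff.mp hB).1
  have h := congrFun (congrFun h1 i) i
  rw [Matrix.mul_apply] at h
  have h2 := congrArg Complex.re h
  rw [Complex.re_sum] at h2
  simpa [Matrix.star_apply, Complex.star_def, Complex.normSq_eq_conj_mul_self, Complex.normSq_apply] using h2

lemma peierls {A : Matrix (Fin n) (Fin n) ℂ} (hA : A.IsHermitian)
    {U : Matrix (Fin n) (Fin n) ℂ} (hU : U ∈ Matrix.unitaryGroup (Fin n) ℂ) (i : Fin n) :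
    Real.exp (((star U * A * U) i i).re) ≤ ((star U * NormedSpace.exp A * U) i i).re := by
  set V : Matrix (Fin n) (Fin n) ℂ := (hA.eigenvectorUnitary : Matrix (Fin n) (Fin n) ℂ) with hV
  set B : Matrix (Fin n) (Fin n) ℂ := star V * U with hBdef
  have hB : B ∈ Matrix.unitaryGroup (Fin n) ℂ :=
    mul_mem (Unitary.star_mem (SetLike.coe_mem hA.eigenvectorUnitary)) hU
  have hstarB : star B = star U * V := by rw [hBdef, Matrix.star_mul, star_star]
  have hAeq : star U * A * U =
      star B * Matrix.diagonal (fun j => ((hA.eigenvalues j : ℝ) : ℂ)) * B := by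
    conv_lhs => rw [hA.spectral_theorem, Unitary.conjStarAlgAut_apply]
    rw [hstarB, hBdef]
    have hd : (Matrix.diagonal (RCLike.ofReal ∘ hA.eigenvalues) : Matrix (Fin n) (Fin n) ℂ)
        = Matrix.diagonal (fun j => ((hA.eigenvalues j : ℝ) : ℂ)) := rfl
    rw [hd]
    noncomm_ring
  have hExp : star U * NormedSpace.exp A * U =
      star B * Matrix.diagonal (fun j => ((Real.exp (hA.eigenvalues j) : ℝ) : ℂ)) * B := by
    rw [exp_hermitian hA, hstarB, hBdef]
    have hd : (Matrix.diagonal (fun i => Complex.exp (hA.eigenvalues i))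
          : Matrix (Fin n) (Fin n) ℂ)
        = Matrix.diagonal (fun j => ((Real.exp (hA.eigenvalues j) : ℝ) : ℂ)) := by
      have : (fun i => Complex.exp ((hA.eigenvalues i : ℝ) : ℂ))
          = fun j => ((Real.exp (hA.eigenvalues j) : ℝ) : ℂ) := by
        funext j; rw [Complex.ofReal_exp]
      rw [this]
    rw [hd]
    noncomm_ring
  rw [hAeq, hExp, entry_conj, entry_conj]
  have hsum : ∑ j, Complex.normSq (B j i) = 1 := col_norm hB i
  have hw : ∀ j ∈ Finset.univ, (0 : ℝ) ≤ Complex.normSq (B j i) :=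
    fun j _ => Complex.normSq_nonneg _
  have hJ := convexOn_exp.map_sum_le (t := Finset.univ)
    (w := fun j => Complex.normSq (B j i))
    (p := fun j => hA.eigenvalues j) hw hsum (fun j _ => Set.mem_univ _)
  simp only [smul_eq_mul] at hJ
  calc Real.exp (∑ j, hA.eigenvalues j * Complex.normSq (B j i))
      = Real.exp (∑ j, Complex.normSq (B j i) * hA.eigenvalues j) := by
        congr 1; exact Finset.sum_congr rfl fun j _ => mul_comm _ _
    _ ≤ ∑ j, Complex.normSq (B j i) * Real.exp (hA.eigenvalues j) := hJ
    _ = ∑ j, Real.exp (hA.eigenvalues j) * Complex.normSq (B j i) :=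
        Finset.sum_congr rfl fun j _ => mul_comm _ _

end TraceExpAux

/-- Trace convexity for `f t = eᵗ - 1`: for positive semidefinite `x, y` and `α ∈ (0,1)`,
`trace (exp(αx + (1-α)y) - I) ≤ α trace (exp x - I) + (1-α) trace (exp y - I)`. -/
theorem trace_exp_convexity {n : ℕ} (x y : Matrix (Fin n) (Fin n) ℂ)
    (hx : x.PosSemidef) (hy : y.PosSemidef) (α : ℝ) (hα : α ∈ Set.Ioo (0 : ℝ) 1) :
    (Matrix.trace (NormedSpace.exp (α • x + (1 - α) • y) - 1)).re
      ≤ α * (Matrix.trace (NormedSpace.exp x - 1)).re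
        + (1 - α) * (Matrix.trace (NormedSpace.exp y - 1)).re := by
  obtain ⟨hα0, hα1⟩ := hα
  have hxh : x.IsHermitian := hx.1
  have hyh : y.IsHermitian := hy.1
  set z : Matrix (Fin n) (Fin n) ℂ := α • x + (1 - α) • y with hzdef
  have hsmul : ∀ (c : ℝ) (M : Matrix (Fin n) (Fin n) ℂ), M.IsHermitian → (c • M).IsHermitian := by
    intro c M hM
    unfold Matrix.IsHermitian
    rw [Matrix.conjTranspose_smul, star_trivial, hM.eq]
  have hzh : z.IsHermitian := (hsmul α x hxh).add (hsmul (1 - α) y hyh)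
  set U : Matrix (Fin n) (Fin n) ℂ := (hzh.eigenvectorUnitary : Matrix (Fin n) (Fin n) ℂ) with hU
  have hUmem : U ∈ Matrix.unitaryGroup (Fin n) ℂ := SetLike.coe_mem _
  have hU1 : star U * U = 1 := (Unitary.mem_iff.mp hUmem).1
  have hU2 : U * star U = 1 := (Unitary.mem_iff.mp hUmem).2
  have hsum_tr : ∀ M : Matrix (Fin n) (Fin n) ℂ,
      ∑ i, ((star U * M * U) i i).re = (Matrix.trace M).re := by
    intro M
    have htr : Matrix.trace (star U * M * U) = Matrix.trace M := by
      rw [Matrix.trace_mul_cycle, hU2, Matrix.one_mul]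
    rw [← htr]
    simp [Matrix.trace, Matrix.diag, Complex.re_sum]
  have hz_exp : (Matrix.trace (NormedSpace.exp z)).re = ∑ i, Real.exp (hzh.eigenvalues i) := by
    rw [TraceExpAux.exp_hermitian hzh, ← hU]
    rw [Matrix.trace_mul_cycle, hU1, Matrix.one_mul, Matrix.trace_diagonal]
    rw [Complex.re_sum]
    exact Finset.sum_congr rfl fun i _ => by rw [← Complex.ofReal_exp, Complex.ofReal_re]
  have hmu : ∀ i, hzh.eigenvalues i
      = α * ((star U * x * U) i i).re + (1 - α) * ((star U * y * U) i i).re := by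
    intro i
    have hdiag : star U * z * U = Matrix.diagonal (RCLike.ofReal ∘ hzh.eigenvalues) := by
      have := hzh.conjStarAlgAut_star_eigenvectorUnitary
      simpa [Unitary.conjStarAlgAut_apply, hU] using this
    have h := congrFun (congrFun hdiag i) i
    rw [Matrix.diagonal_apply_eq] at h
    have hsplit : star U * z * U = α • (star U * x * U) + (1 - α) • (star U * y * U) := by
      rw [hzdef, Matrix.mul_add, Matrix.add_mul, Matrix.mul_smul, Matrix.smul_mul,
        Matrix.mul_smul, Matrix.smul_mul]
    rw [hsplit] at h
    have h2 := congrArg Complex.re h.symm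
    simpa [Matrix.add_apply, Matrix.smul_apply, Complex.real_smul, Complex.add_re,
      Complex.mul_re, Complex.ofReal_re, Complex.ofReal_im] using h2
  have main : (Matrix.trace (NormedSpace.exp z)).re
      ≤ α * (Matrix.trace (NormedSpace.exp x)).re
        + (1 - α) * (Matrix.trace (NormedSpace.exp y)).re := by
    rw [hz_exp, ← hsum_tr (NormedSpace.exp x), ← hsum_tr (NormedSpace.exp y),
      Finset.mul_sum, Finset.mul_sum, ← Finset.sum_add_distrib]
    refine Finset.sum_le_sum fun i _ => ?_
    rw [hmu i]
    have h1 : Real.exp (α * ((star U * x * U) i i).re + (1 - α) * ((star U * y * U) i i).re)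
        ≤ α * Real.exp (((star U * x * U) i i).re)
          + (1 - α) * Real.exp (((star U * y * U) i i).re) := by
      have := convexOn_exp.2 (Set.mem_univ (((star U * x * U) i i).re))
        (Set.mem_univ (((star U * y * U) i i).re))
        hα0.le (sub_nonneg.mpr hα1.le) (by ring : α + (1 - α) = 1)
      simpa using this
    refine h1.trans ?_
    exact add_le_add (mul_le_mul_of_nonneg_left (TraceExpAux.peierls hxh hUmem i) hα0.le)
      (mul_le_mul_of_nonneg_left (TraceExpAux.peierls hyh hUmem i) (by linarith))
  have hc : ∀ M : Matrix (Fin n) (Fin n) ℂ,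
      (Matrix.trace (M - 1)).re = (Matrix.trace M).re - n := by
    intro M
    rw [Matrix.trace_sub, Matrix.trace_one, Complex.sub_re]
    norm_num [Complex.natCast_re]
  rw [hc, hc, hc]
  nlinarith [main]
end

section
/- For positive semidefinite n×n complex matrices x and y, trace(log(x + y + I)) ≤ trace(log(x + I)) + trace(log(y + I)), where I is the identity matrix and log is applied via the functional calculus. -/
open Matrix
open scoped NNReal ComplexOrder

/-- `traceLogOneAdd a ha = trace (log (a + I)) = ∑ᵢ log (λᵢ + 1)` for a Hermitian `a`. -/
noncomputable def traceLogOneAdd {n : ℕ} (a : Matrix (Fin n) (Fin n) ℂ)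
    (ha : a.IsHermitian) : ℝ := ∑ i, Real.log (ha.eigenvalues i + 1)


lemma det_add_one_eq {n : ℕ} {a : Matrix (Fin n) (Fin n) ℂ} (ha : a.IsHermitian) :
    (a + 1).det = ((∏ i, (ha.eigenvalues i + 1) : ℝ) : ℂ) := by
  set U : Matrix (Fin n) (Fin n) ℂ := (ha.eigenvectorUnitary : Matrix (Fin n) (Fin n) ℂ) with hU_def
  have hU1 : U * star U = 1 := Matrix.mem_unitaryGroup_iff.mp ha.eigenvectorUnitary.2
  have key : a + 1 = U * (diagonal (RCLike.ofReal ∘ ha.eigenvalues) + 1) * star U := by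
    rw [mul_add, mul_one, add_mul, hU1]
    conv_lhs => rw [ha.spectral_theorem, Unitary.conjStarAlgAut_apply]
  have hUdet : U.det * (star U).det = 1 := by rw [← det_mul, hU1, det_one]
  have hdiag : (diagonal (RCLike.ofReal ∘ ha.eigenvalues) + (1 : Matrix (Fin n) (Fin n) ℂ)).det
      = ∏ i, ((ha.eigenvalues i : ℂ) + 1) := by
    rw [← diagonal_one, diagonal_add, det_diagonal]
    rfl
  rw [key, det_mul, det_mul, hdiag]
  push_cast
  rw [mul_comm U.det, mul_assoc, hUdet, mul_one]

open scoped MatrixOrder in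
lemma det_decomp {n : ℕ} {a b : Matrix (Fin n) (Fin n) ℂ}
    (ha : a.PosSemidef) (hb : b.PosSemidef) :
    ∃ z : Matrix (Fin n) (Fin n) ℂ, z.PosSemidef ∧
      (a + b + 1).det = (a + 1).det * (z + 1).det ∧
      (z + 1).det = (CFC.sqrt b * (a + 1)⁻¹ * CFC.sqrt b + 1).det := by
  have hp : (a + 1).PosDef := Matrix.PosDef.posSemidef_add ha Matrix.PosDef.one
  set s := CFC.sqrt (a + 1) with hs_def
  have hs : s.PosSemidef := (CFC.sqrt_nonneg (a + 1)).posSemidef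
  have hss : s * s = a + 1 := CFC.sqrt_mul_sqrt_self (a + 1) hp.posSemidef.nonneg
  have hdet : s.det ≠ 0 := by
    intro h
    have h2 := hp.det_pos.ne'
    rw [← hss, det_mul, h, mul_zero] at h2
    exact h2 rfl
  have hu : IsUnit s.det := isUnit_iff_ne_zero.mpr hdet
  have h1 : s * s⁻¹ = 1 := mul_nonsing_inv s hu
  have h2 : s⁻¹ * s = 1 := nonsing_inv_mul s hu
  have hsi : (s⁻¹)ᴴ = s⁻¹ := hs.1.inv
  have hinv : s⁻¹ * s⁻¹ = (a + 1)⁻¹ := by rw [← Matrix.mul_inv_rev, hss]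
  refine ⟨s⁻¹ * b * s⁻¹, ?_, ?_, ?_⟩
  · have := hb.conjTranspose_mul_mul_same s⁻¹
    rwa [hsi] at this
  · have cancel : s * (s⁻¹ * b * s⁻¹) * s = b := by
      rw [← mul_assoc, ← mul_assoc, h1, one_mul, mul_assoc, h2, mul_one]
    have key : a + b + 1 = s * (s⁻¹ * b * s⁻¹ + 1) * s := by
      rw [mul_add, mul_one, add_mul, hss, cancel]
      abel
    rw [key, det_mul, det_mul, ← hss, det_mul]
    ring
  · have e1 : s⁻¹ * b * s⁻¹ = (s⁻¹ * CFC.sqrt b) * (CFC.sqrt b * s⁻¹) := by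
      simp only [mul_assoc]
      rw [← mul_assoc (CFC.sqrt b), CFC.sqrt_mul_sqrt_self b hb.nonneg]
    have e2 : (CFC.sqrt b * s⁻¹) * (s⁻¹ * CFC.sqrt b) = CFC.sqrt b * (a + 1)⁻¹ * CFC.sqrt b := by
      rw [← hinv]
      simp only [mul_assoc]
    rw [e1, det_mul_add_one_comm, e2]

open scoped MatrixOrder in
lemma prod_eig_add_one_ineq {n : ℕ} (x y : Matrix (Fin n) (Fin n) ℂ)
    (hx : x.PosSemidef) (hy : y.PosSemidef) :
    (∏ i, ((hx.add hy).1.eigenvalues i + 1)) ≤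
      (∏ i, (hx.1.eigenvalues i + 1)) * ∏ i, (hy.1.eigenvalues i + 1) := by
  obtain ⟨z, hz, hd1, hd2⟩ := det_decomp hx hy
  set r := CFC.sqrt y with hr
  have hrr : r * r = y := CFC.sqrt_mul_sqrt_self y hy.nonneg
  have hrH : rᴴ = r := (CFC.sqrt_nonneg y).posSemidef.1
  have hp : (x + 1).PosDef := Matrix.PosDef.posSemidef_add hx Matrix.PosDef.one
  set w := r * (x + 1)⁻¹ * r with hw
  have hwpsd : w.PosSemidef := by
    have := hp.inv.posSemidef.conjTranspose_mul_mul_same r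
    rwa [hrH] at this
  set s := CFC.sqrt (x + 1) with hs_def
  have hs : s.PosSemidef := (CFC.sqrt_nonneg (x + 1)).posSemidef
  have hss : s * s = x + 1 := CFC.sqrt_mul_sqrt_self (x + 1) hp.posSemidef.nonneg
  have hdet : s.det ≠ 0 := by
    intro h
    have h2 := hp.det_pos.ne'
    rw [← hss, det_mul, h, mul_zero] at h2
    exact h2 rfl
  have hu : IsUnit s.det := isUnit_iff_ne_zero.mpr hdet
  have h1 : s * s⁻¹ = 1 := mul_nonsing_inv s hu
  have h2 : s⁻¹ * s = 1 := nonsing_inv_mul s hu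
  have hsi : (s⁻¹)ᴴ = s⁻¹ := hs.1.inv
  have hinv : s⁻¹ * s⁻¹ = (x + 1)⁻¹ := by rw [← Matrix.mul_inv_rev, hss]
  have hxs : s⁻¹ * x * s⁻¹ = 1 - (x + 1)⁻¹ := by
    have hx' : x = s * s - 1 := by rw [hss]; abel
    conv_lhs => rw [hx']
    rw [mul_sub, mul_one, sub_mul, ← mul_assoc, h2, one_mul, h1, hinv]
  have hyw : (y - w).PosSemidef := by
    have key : y - w = (s⁻¹ * r)ᴴ * x * (s⁻¹ * r) := by
      rw [conjTranspose_mul, hrH, hsi]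
      have e : r * s⁻¹ * x * (s⁻¹ * r) = r * (s⁻¹ * x * s⁻¹) * r := by
        simp only [mul_assoc]
      rw [e, hxs, mul_sub, mul_one, sub_mul, hrr, ← hw]
    rw [key]
    exact hx.conjTranspose_mul_mul_same _
  obtain ⟨u, hupsd, hd3, -⟩ := det_decomp hwpsd hyw
  have hsum : w + (y - w) = y := by abel
  rw [hsum] at hd3
  rw [hd2] at hd1
  -- convert to real equalities
  have e1 : (∏ i, ((hx.add hy).1.eigenvalues i + 1)) =
      (∏ i, (hx.1.eigenvalues i + 1)) * ∏ i, (hwpsd.1.eigenvalues i + 1) := by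
    rw [det_add_one_eq (hx.add hy).1, det_add_one_eq hx.1, det_add_one_eq hwpsd.1] at hd1
    exact_mod_cast hd1
  have e2 : (∏ i, (hy.1.eigenvalues i + 1)) =
      (∏ i, (hwpsd.1.eigenvalues i + 1)) * ∏ i, (hupsd.1.eigenvalues i + 1) := by
    rw [det_add_one_eq hy.1, det_add_one_eq hwpsd.1, det_add_one_eq hupsd.1] at hd3
    exact_mod_cast hd3
  have hPx : (0:ℝ) ≤ ∏ i, (hx.1.eigenvalues i + 1) :=
    Finset.prod_nonneg fun i _ => by linarith [hx.eigenvalues_nonneg i]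
  have hPw : (0:ℝ) ≤ ∏ i, (hwpsd.1.eigenvalues i + 1) :=
    Finset.prod_nonneg fun i _ => by linarith [hwpsd.eigenvalues_nonneg i]
  have hPu : (1:ℝ) ≤ ∏ i, (hupsd.1.eigenvalues i + 1) := by
    calc (1:ℝ) = ∏ _i : Fin n, (1:ℝ) := by simp
    _ ≤ ∏ i, (hupsd.1.eigenvalues i + 1) :=
      Finset.prod_le_prod (fun i _ => zero_le_one)
        (fun i _ => by linarith [hupsd.eigenvalues_nonneg i])
  rw [e1, e2]
  calc (∏ i, (hx.1.eigenvalues i + 1)) * ∏ i, (hwpsd.1.eigenvalues i + 1)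
      ≤ (∏ i, (hx.1.eigenvalues i + 1)) *
        ((∏ i, (hwpsd.1.eigenvalues i + 1)) * ∏ i, (hupsd.1.eigenvalues i + 1)) := by
        exact mul_le_mul_of_nonneg_left (le_mul_of_one_le_right hPw hPu) hPx

/-- For positive semidefinite `x, y`,
`trace (log (x + y + I)) ≤ trace (log (x + I)) + trace (log (y + I))`. -/
theorem trace_log_subadditive {n : ℕ} (x y : Matrix (Fin n) (Fin n) ℂ)
    (hx : x.PosSemidef) (hy : y.PosSemidef) :
    traceLogOneAdd (x + y) (hx.1.add hy.1)
      ≤ traceLogOneAdd x hx.1 + traceLogOneAdd y hy.1 := by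
  unfold traceLogOneAdd
  have hxy : (x + y).PosSemidef := hx.add hy
  have n1 : ∀ i ∈ Finset.univ, ((hx.1.add hy.1).eigenvalues i + 1) ≠ (0:ℝ) := fun i _ => by
    have := hxy.eigenvalues_nonneg i; intro h; rw [show (hx.1.add hy.1) = hxy.1 from rfl] at h; linarith
  have n2 : ∀ i ∈ Finset.univ, (hx.1.eigenvalues i + 1) ≠ (0:ℝ) := fun i _ => by
    have := hx.eigenvalues_nonneg i; intro h; linarith
  have n3 : ∀ i ∈ Finset.univ, (hy.1.eigenvalues i + 1) ≠ (0:ℝ) := fun i _ => by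
    have := hy.eigenvalues_nonneg i; intro h; linarith
  have hPx : (0:ℝ) < ∏ i, (hx.1.eigenvalues i + 1) :=
    Finset.prod_pos fun i _ => by linarith [hx.eigenvalues_nonneg i]
  have hPy : (0:ℝ) < ∏ i, (hy.1.eigenvalues i + 1) :=
    Finset.prod_pos fun i _ => by linarith [hy.eigenvalues_nonneg i]
  have hPxy : (0:ℝ) < ∏ i, ((hx.1.add hy.1).eigenvalues i + 1) :=
    Finset.prod_pos fun i _ => by linarith [hxy.eigenvalues_nonneg i]
  rw [← Real.log_prod n1, ← Real.log_prod n2, ← Real.log_prod n3,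
    ← Real.log_mul hPx.ne' hPy.ne']
  have key := prod_eig_add_one_ineq x y hx hy
  exact Real.log_le_log hPxy key
end
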